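/- arXiv:1401.5978 — 3 statements merged into one kernel-verified Lean document; each statement's English description precedes it below -/
import Mathlib

section
/- Let n be a nonnegative integer. Then the little q-Legendre polynomial P_n(x|q) = ∑_{k=0}^{n} qbinom(n,k) qbinom(n+k,k) q^{k(k+1)/2 - nk} (-x)^k satisfies the identity P_n(x|q) = ∑_{k=0}^{n} qbinom(n,k)^2 q^{k(k+1)/2 - nk} (-x)^k (xq;q)_{n-k}, as an identity of polynomials in x over the field of rational functions in q. -/
open Polynomial Finset

/-- The variable `q` as an element of the field of rational functions over `ℚ`. -/
noncomputable def q : RatFunc ℚ := RatFunc.X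

/-- The q-shifted factorial `(a; Q)_n = (1-a)(1-aQ)⋯(1-aQ^{n-1})`. -/
noncomputable def qPoch (a Q : RatFunc ℚ) (n : ℕ) : RatFunc ℚ :=
  ∏ i ∈ Finset.range n, (1 - a * Q ^ i)

/-- The q-integer `[p] = 1 + q + ⋯ + q^{p-1}`. -/
noncomputable def qInt (p : ℕ) : RatFunc ℚ := ∑ i ∈ Finset.range p, q ^ i

/-- The Gaussian binomial coefficient in base `Q`. -/
noncomputable def qBinom (n k : ℕ) (Q : RatFunc ℚ) : RatFunc ℚ :=
  qPoch (Q ^ (n - k + 1)) Q k / qPoch Q Q k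

/-- `ModQ r p A B` : the difference `A - B` lies in the ideal generated by `[p]^r`
in the localization of `ℚ[q]` at the irreducible polynomial `[p]`;
concretely `(A - B) * b = [p]^r * a` for polynomials `a b` with `[p] ∤ b`. -/
def ModQ (r p : ℕ) (A B : RatFunc ℚ) : Prop :=
  ∃ a b : Polynomial ℚ, ¬ ((∑ i ∈ Finset.range p, Polynomial.X ^ i) ∣ b) ∧
    (A - B) * algebraMap (Polynomial ℚ) (RatFunc ℚ) b =
      qInt p ^ r * algebraMap (Polynomial ℚ) (RatFunc ℚ) a

lemma q_ne_zero : q ≠ 0 := RatFunc.X_ne_zero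

lemma one_sub_q_pow_ne_zero (i : ℕ) : (1 : RatFunc ℚ) - q ^ (i+1) ≠ 0 := by
  intro h
  have h2 : (q : RatFunc ℚ) ^ (i+1) = 1 := by linear_combination -h
  have h3 : (algebraMap (Polynomial ℚ) (RatFunc ℚ)) (Polynomial.X ^ (i+1)) =
      (algebraMap (Polynomial ℚ) (RatFunc ℚ)) 1 := by
    simpa [q, map_pow, RatFunc.algebraMap_X] using h2
  have h4 := RatFunc.algebraMap_injective ℚ h3
  have := congrArg Polynomial.natDegree h4
  simp [Polynomial.natDegree_X_pow] at this

noncomputable def F (n : ℕ) : RatFunc ℚ := ∏ i ∈ Finset.range n, (1 - q ^ (i+1))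

lemma F_ne_zero (n : ℕ) : F n ≠ 0 :=
  Finset.prod_ne_zero_iff.2 fun i _ => one_sub_q_pow_ne_zero i

lemma F_zero : F 0 = 1 := by simp [F]

lemma F_succ (n : ℕ) : F (n+1) = F n * (1 - q ^ (n+1)) := by
  simp [F, Finset.prod_range_succ]

noncomputable def B (n k : ℕ) : RatFunc ℚ :=
  if k ≤ n then F n / (F k * F (n-k)) else 0

lemma B_eq {n k : ℕ} (h : k ≤ n) : B n k = F n / (F k * F (n-k)) := if_pos h

lemma B_of_lt {n k : ℕ} (h : n < k) : B n k = 0 := if_neg (by omega)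

lemma B_zero_right (n : ℕ) : B n 0 = 1 := by
  rw [B_eq (Nat.zero_le n)]
  simp [F_zero, div_self (F_ne_zero n)]

lemma B_self (n : ℕ) : B n n = 1 := by
  rw [B_eq le_rfl]
  simp [F_zero, div_self (F_ne_zero n)]

lemma B_symm {n k : ℕ} (h : k ≤ n) : B n (n-k) = B n k := by
  rw [B_eq h, B_eq (Nat.sub_le n k), Nat.sub_sub_self h, mul_comm]

lemma pascal (m k : ℕ) : B (m+1) (k+1) = B m (k+1) + q ^ (m-k) * B m k := by
  rcases lt_trichotomy k m with h | h | h
  · obtain ⟨j, rfl⟩ : ∃ j, m = k + j + 1 := ⟨m - k - 1, by omega⟩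
    rw [B_eq (by omega), B_eq (by omega), B_eq (by omega)]
    have e1 : k + j + 1 + 1 - (k+1) = j + 1 := by omega
    have e2 : k + j + 1 - (k+1) = j := by omega
    have e3 : k + j + 1 - k = j + 1 := by omega
    rw [e1, e2, e3]
    rw [F_succ (k+j+1), F_succ j, F_succ k]
    have h1 := F_ne_zero k
    have h2 := F_ne_zero j
    have h3 := F_ne_zero (k+j+1)
    have h4 := one_sub_q_pow_ne_zero k
    have h5 := one_sub_q_pow_ne_zero j
    field_simp
    ring
  · subst h
    rw [B_self, B_self, B_of_lt (by omega)]
    simp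
  · rw [B_of_lt (by omega), B_of_lt (by omega), B_of_lt (by omega)]
    simp

lemma trinom {n m k : ℕ} (hk : k ≤ m) (hm : m ≤ n) :
    B n k * B (n-k) (m-k) = B n m * B m k := by
  rw [B_eq (hk.trans hm), B_eq (by omega : m - k ≤ n - k), B_eq hm, B_eq hk]
  have e1 : n - k - (m - k) = n - m := by omega
  rw [e1]
  have h1 := F_ne_zero k
  have h2 := F_ne_zero (m-k)
  have h3 := F_ne_zero (n-m)
  have h4 := F_ne_zero (n-k)
  have h5 := F_ne_zero m
  have h6 := F_ne_zero n
  field_simp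

lemma qPoch_q (k : ℕ) : qPoch q q k = F k := by
  unfold qPoch F
  apply Finset.prod_congr rfl
  intro i _
  rw [← pow_succ']

lemma qBinom_eq {n k : ℕ} (h : k ≤ n) : qBinom n k q = B n k := by
  have key : F n = F (n-k) * qPoch (q ^ (n - k + 1)) q k := by
    unfold F qPoch
    have hn : n = (n - k) + k := by omega
    conv_lhs => rw [hn]
    rw [Finset.prod_range_add (fun i => 1 - q ^ (i+1)) (n-k) k]
    congr 1
    apply Finset.prod_congr rfl
    intro i _
    rw [← pow_add]
    congr 2
    omega
  rw [qBinom, qPoch_q, B_eq h]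
  rw [key]
  have h1 := F_ne_zero k
  have h2 := F_ne_zero (n-k)
  have h3 := F_ne_zero n
  have hP : qPoch (q ^ (n-k+1)) q k ≠ 0 := by
    intro h0
    rw [h0, mul_zero] at key
    exact F_ne_zero n key
  field_simp

lemma tri_succ (j : ℕ) : (j+1)*j/2 = j*(j-1)/2 + j := by
  have a : (j+1).choose 2 = (j+1)*j/2 := by rw [Nat.choose_two_right]; norm_num
  have b : j.choose 2 = j*(j-1)/2 := Nat.choose_two_right j
  rw [← a, ← b, Nat.choose_succ_succ, Nat.choose_one_right, add_comm]

noncomputable def A (n m : ℕ) : Polynomial (RatFunc ℚ) :=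
  ∏ i ∈ Finset.range m, (1 + Polynomial.C (q^(n+i)) * Polynomial.X)

lemma coeff_mul_lin (p : Polynomial (RatFunc ℚ)) (a : RatFunc ℚ) (j : ℕ) :
    (p * (1 + Polynomial.C a * Polynomial.X)).coeff (j+1)
      = p.coeff (j+1) + a * p.coeff j := by
  rw [mul_add, mul_one, Polynomial.coeff_add, mul_comm (Polynomial.C a) Polynomial.X,
    ← mul_assoc, Polynomial.coeff_mul_C, Polynomial.coeff_mul_X, mul_comm]

lemma coeff_mul_lin_zero (p : Polynomial (RatFunc ℚ)) (a : RatFunc ℚ) :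
    (p * (1 + Polynomial.C a * Polynomial.X)).coeff 0 = p.coeff 0 := by
  rw [Polynomial.mul_coeff_zero]
  simp

lemma coeff_A (n m : ℕ) : ∀ k, (A n m).coeff k = B m k * q^(n*k + k*(k-1)/2) := by
  induction m with
  | zero =>
    intro k
    cases k with
    | zero => simp [A, B_zero_right]
    | succ j =>
      rw [B_of_lt (by omega)]
      simp [A, Polynomial.coeff_one]
  | succ m ih =>
    intro k
    have hA : A n (m+1) = A n m * (1 + Polynomial.C (q^(n+m)) * Polynomial.X) := by
      rw [A, Finset.prod_range_succ]; rfl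
    cases k with
    | zero =>
      rw [hA, coeff_mul_lin_zero, ih 0, B_zero_right, B_zero_right]
    | succ j =>
      rw [hA, coeff_mul_lin, ih (j+1), ih j, pascal]
      simp only [Nat.add_sub_cancel]
      rcases le_or_gt j m with hjm | hjm
      · have hexp : (m-j) + (n*(j+1) + (j+1)*j/2) = (n+m) + (n*j + j*(j-1)/2) := by
          have h1 := tri_succ j
          have h2 : n * (j+1) = n * j + n := Nat.mul_succ n j
          omega
        have hq : q^(m-j) * q^(n*(j+1) + (j+1)*j/2) = q^(n+m) * q^(n*j + j*(j-1)/2) := by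
          rw [← pow_add, ← pow_add, hexp]
        linear_combination (-(B m j)) * hq
      · rw [B_of_lt hjm]
        ring

lemma tri_add' (a b : ℕ) : (a+b)*((a+b)-1)/2 = a*(a-1)/2 + b*(b-1)/2 + a*b := by
  induction b with
  | zero => simp
  | succ b ih =>
    have h1 : a + (b+1) = (a+b)+1 := by omega
    rw [h1, Nat.add_sub_cancel, tri_succ (a+b), ih, Nat.add_sub_cancel, tri_succ b, Nat.mul_succ]
    generalize a*(a-1)/2 = x
    generalize b*(b-1)/2 = y
    generalize a*b = z
    omega

lemma vandermonde {n m : ℕ} (h : m ≤ n) :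
    ∑ k ∈ Finset.range (m+1), B n k * B m k * q^((n-k)*(m-k)) = B (n+m) m := by
  have hsplit : A 0 (n+m) = A 0 n * A n m := by
    unfold A
    rw [Finset.prod_range_add]
    simp [zero_add]
  have hc := congrArg (fun p => Polynomial.coeff p m) hsplit
  simp only [Polynomial.coeff_mul, Finset.Nat.sum_antidiagonal_eq_sum_range_succ_mk,
    coeff_A] at hc
  have hc2 : ∀ k ∈ Finset.range (m+1),
      B n k * q^(0*k + k*(k-1)/2) * (B m (m-k) * q^(n*(m-k) + (m-k)*((m-k)-1)/2))
      = B n k * B m k * q^((n-k)*(m-k)) * q^(m*(m-1)/2) := by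
    intro k hk
    have hkm : k ≤ m := by simpa using Nat.lt_succ_iff.mp (Finset.mem_range.mp hk)
    rw [← B_symm hkm]
    have hexp : 0*k + k*(k-1)/2 + (n*(m-k) + (m-k)*((m-k)-1)/2)
        = (n-k)*(m-k) + m*(m-1)/2 := by
      have t : m*(m-1)/2 = k*(k-1)/2 + (m-k)*((m-k)-1)/2 + k*(m-k) := by
        have := tri_add' k (m-k)
        rwa [show k + (m-k) = m from by omega] at this
      have s : (n-k)*(m-k) = n*(m-k) - k*(m-k) := Nat.sub_mul n k (m-k)
      have hle : k*(m-k) ≤ n*(m-k) := Nat.mul_le_mul_right _ (hkm.trans h)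
      rw [t, s]
      generalize n*(m-k) = u at *
      generalize k*(m-k) = v at *
      generalize k*(k-1)/2 = x
      generalize (m-k)*((m-k)-1)/2 = y
      omega
    have hpow : q^(0*k + k*(k-1)/2) * q^(n*(m-k) + (m-k)*((m-k)-1)/2)
        = q^((n-k)*(m-k)) * q^(m*(m-1)/2) := by
      rw [← pow_add, ← pow_add, hexp]
    linear_combination (B n k * B m (m-k)) * hpow
  rw [Finset.sum_congr rfl hc2, ← Finset.sum_mul] at hc
  have e0 : 0*m + m*(m-1)/2 = m*(m-1)/2 := by omega
  rw [e0] at hc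
  have hq : q^(m*(m-1)/2) ≠ 0 := pow_ne_zero _ q_ne_zero
  exact mul_right_cancel₀ hq hc.symm

lemma choose_two (j : ℕ) : (j+1).choose 2 = j*(j+1)/2 := by
  rw [Nat.choose_two_right, Nat.add_sub_cancel, mul_comm]

lemma T_succ (j : ℕ) : (j+1)*((j+1)+1)/2 = j*(j+1)/2 + (j+1) := by
  have h := Nat.triangle_succ (j+1)
  rw [Nat.add_sub_cancel, Nat.add_sub_cancel] at h
  rw [mul_comm (j+1) ((j+1)+1), h, mul_comm (j+1) j]

lemma coeff_mul_lin' (p : Polynomial (RatFunc ℚ)) (a : RatFunc ℚ) (j : ℕ) :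
    (p * (1 - Polynomial.C a * Polynomial.X)).coeff (j+1)
      = p.coeff (j+1) - a * p.coeff j := by
  have h : (1 : Polynomial (RatFunc ℚ)) - Polynomial.C a * Polynomial.X
      = 1 + Polynomial.C (-a) * Polynomial.X := by
    rw [map_neg]; ring
  rw [h, coeff_mul_lin]
  ring

lemma coeff_mul_lin_zero' (p : Polynomial (RatFunc ℚ)) (a : RatFunc ℚ) :
    (p * (1 - Polynomial.C a * Polynomial.X)).coeff 0 = p.coeff 0 := by
  rw [Polynomial.mul_coeff_zero]
  simp

noncomputable def H (N : ℕ) : Polynomial (RatFunc ℚ) :=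
  ∏ i ∈ Finset.range N, (1 - Polynomial.C (q^(i+1)) * Polynomial.X)

lemma coeff_H (N : ℕ) : ∀ k, (H N).coeff k = (-1)^k * B N k * q^(k*(k+1)/2) := by
  induction N with
  | zero =>
    intro k
    cases k with
    | zero => simp [H, B_zero_right]
    | succ j =>
      rw [B_of_lt (by omega)]
      simp [H, Polynomial.coeff_one]
  | succ N ih =>
    intro k
    have hH : H (N+1) = H N * (1 - Polynomial.C (q^(N+1)) * Polynomial.X) := by
      rw [H, Finset.prod_range_succ]; rfl
    cases k with
    | zero =>
      rw [hH, coeff_mul_lin_zero', ih 0, B_zero_right, B_zero_right]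
    | succ j =>
      rw [hH, coeff_mul_lin', ih (j+1), ih j, pascal]
      rcases le_or_gt j N with hjN | hjN
      · have hexp : (N-j) + (j+1)*((j+1)+1)/2 = (N+1) + j*(j+1)/2 := by
          have := T_succ j
          omega
        have hpow : q^(N-j) * q^((j+1)*((j+1)+1)/2) = q^(N+1) * q^(j*(j+1)/2) := by
          rw [← pow_add, ← pow_add, hexp]
        have hsign : ((-1 : RatFunc ℚ))^(j+1) = -(-1)^j := by
          rw [pow_succ]; ring
        rw [hsign]
        linear_combination (B N j * (-1)^j) * hpow
      · rw [B_of_lt hjN]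
        ring

lemma tri_add (a b : ℕ) : (a+b)*((a+b)+1)/2 = a*(a+1)/2 + b*(b+1)/2 + a*b := by
  induction b with
  | zero => simp
  | succ b ih =>
    have h1 : a + (b+1) = (a+b)+1 := by omega
    rw [h1, T_succ (a+b), ih, T_succ b]
    have ha : a*(b+1) = a*b + a := by ring
    generalize a*(b+1) = w at ha ⊢
    generalize a*b = z at ha ⊢
    generalize a*(a+1)/2 = x
    generalize b*(b+1)/2 = y
    omega

lemma key_exp {n m k : ℕ} (hkm : k ≤ m) (hmn : m ≤ n) :
    q^((k*(k+1)/2 : ℕ) - (n:ℤ)*k) * q^(((m-k)*((m-k)+1)/2 : ℕ))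
      = q^((m*(m+1)/2 : ℕ) - (n:ℤ)*m) * q^(((n-k)*(m-k) : ℕ)) := by
  rw [← zpow_natCast q ((m-k)*((m-k)+1)/2), ← zpow_natCast q ((n-k)*(m-k)),
    ← zpow_add₀ q_ne_zero, ← zpow_add₀ q_ne_zero]
  congr 1
  have t : (m*(m+1)/2 : ℕ) = k*(k+1)/2 + (m-k)*((m-k)+1)/2 + k*(m-k) := by
    have := tri_add k (m-k)
    rwa [show k + (m-k) = m from by omega] at this
  have e1 : ((m-k:ℕ):ℤ) = (m:ℤ) - k := Nat.cast_sub hkm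
  have e2 : ((n-k:ℕ):ℤ) = (n:ℤ) - k := Nat.cast_sub (hkm.trans hmn)
  rw [t]
  push_cast [e1, e2]
  ring

lemma coeff_term (d : RatFunc ℚ) (k N m : ℕ) :
    (Polynomial.C d * (-Polynomial.X)^k * H N).coeff m
      = if k ≤ m then d * (-1)^k * (H N).coeff (m-k) else 0 := by
  have h : Polynomial.C d * (-Polynomial.X)^k * H N
      = Polynomial.C (d * (-1)^k) * (H N * Polynomial.X ^ k) := by
    rw [neg_pow, map_mul, map_pow, map_neg, map_one]
    ring
  rw [h, Polynomial.coeff_C_mul, Polynomial.coeff_mul_X_pow']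
  split <;> simp

lemma coeff_cx (c : RatFunc ℚ) (k m : ℕ) :
    (Polynomial.C c * (-Polynomial.X)^k).coeff m = if m = k then c * (-1)^k else 0 := by
  rw [neg_pow, show ((-1 : Polynomial (RatFunc ℚ)))^k = Polynomial.C ((-1)^k) from by
    rw [map_pow, map_neg, map_one], ← mul_assoc, ← map_mul, Polynomial.coeff_C_mul,
    Polynomial.coeff_X_pow, mul_ite, mul_one, mul_zero]

/-- New expansion of the little q-Legendre polynomial:
`∑_{k≤n} qbinom(n,k) qbinom(n+k,k) q^{k(k+1)/2-nk} (-x)^k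
 = ∑_{k≤n} qbinom(n,k)² q^{k(k+1)/2-nk} (-x)^k (xq;q)_{n-k}`. -/
theorem little_q_legendre_expansion (n : ℕ) :
    (∑ k ∈ Finset.range (n + 1),
        Polynomial.C (qBinom n k q * qBinom (n + k) k q *
            q ^ ((k * (k + 1) / 2 : ℕ) - (n : ℤ) * k)) *
          (-Polynomial.X) ^ k : Polynomial (RatFunc ℚ))
      = ∑ k ∈ Finset.range (n + 1),
          Polynomial.C (qBinom n k q ^ 2 * q ^ ((k * (k + 1) / 2 : ℕ) - (n : ℤ) * k)) *
            (-Polynomial.X) ^ k *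
            ∏ i ∈ Finset.range (n - k),
              (1 - Polynomial.C (q ^ (i + 1)) * Polynomial.X) := by
  show _ = ∑ k ∈ Finset.range (n + 1),
      Polynomial.C (qBinom n k q ^ 2 * q ^ ((k * (k + 1) / 2 : ℕ) - (n : ℤ) * k)) *
        (-Polynomial.X) ^ k * H (n - k)
  apply Polynomial.ext
  intro m
  rw [Polynomial.finset_sum_coeff, Polynomial.finset_sum_coeff]
  have hL : (∑ k ∈ Finset.range (n+1),
      (Polynomial.C (qBinom n k q * qBinom (n + k) k q *
          q ^ ((k * (k + 1) / 2 : ℕ) - (n : ℤ) * k)) * (-Polynomial.X) ^ k).coeff m)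
      = if m ∈ Finset.range (n+1) then
          qBinom n m q * qBinom (n + m) m q *
            q ^ ((m * (m + 1) / 2 : ℕ) - (n : ℤ) * m) * (-1)^m else 0 := by
    rw [← Finset.sum_ite_eq (Finset.range (n+1)) m
      (fun k => qBinom n k q * qBinom (n + k) k q *
        q ^ ((k * (k + 1) / 2 : ℕ) - (n : ℤ) * k) * (-1)^k)]
    exact Finset.sum_congr rfl fun k _ => coeff_cx _ k m
  rw [hL]
  rw [Finset.sum_congr rfl (fun k (_ : k ∈ Finset.range (n+1)) =>
    coeff_term (qBinom n k q ^ 2 * q ^ ((k * (k + 1) / 2 : ℕ) - (n : ℤ) * k)) k (n-k) m)]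
  by_cases hmn : m ≤ n
  · rw [if_pos (by simp [Nat.lt_succ_iff, hmn])]
    rw [← Finset.sum_subset (Finset.range_subset_range.mpr (by omega : m+1 ≤ n+1))
      (fun k _ hk2 => by
        rw [if_neg]
        simpa [Nat.lt_succ_iff] using hk2)]
    have step : ∀ k ∈ Finset.range (m+1),
        (if k ≤ m then qBinom n k q ^ 2 * q ^ ((k * (k + 1) / 2 : ℕ) - (n : ℤ) * k) * (-1)^k
            * (H (n-k)).coeff (m-k) else 0)
        = B n m * (-1)^m * q ^ ((m * (m + 1) / 2 : ℕ) - (n : ℤ) * m) *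
            (B n k * B m k * q^((n-k)*(m-k))) := by
      intro k hk
      have hkm : k ≤ m := by simpa [Nat.lt_succ_iff] using hk
      rw [if_pos hkm, coeff_H, qBinom_eq (hkm.trans hmn)]
      have h1 := key_exp hkm hmn
      have h2 := trinom hkm hmn
      have h3 : ((-1 : RatFunc ℚ))^k * (-1)^(m-k) = (-1)^m := by
        rw [← pow_add]
        congr 1
        omega
      linear_combination
        (B n k * B n k * B (n-k) (m-k) *
          (q ^ ((k*(k+1)/2 : ℕ) - (n:ℤ)*k) * q^((m-k)*((m-k)+1)/2))) * h3
        + ((-1:RatFunc ℚ)^m * B n k * B n k * B (n-k) (m-k)) * h1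
        + ((-1:RatFunc ℚ)^m * B n k *
          (q^((m*(m+1)/2 : ℕ) - (n:ℤ)*m) * q^((n-k)*(m-k)))) * h2
    rw [Finset.sum_congr rfl step, ← Finset.mul_sum, vandermonde hmn,
      qBinom_eq hmn, qBinom_eq (Nat.le_add_left m n)]
    ring
  · rw [if_neg (by simp [Nat.lt_succ_iff]; omega)]
    symm
    apply Finset.sum_eq_zero
    intro k hk
    have hk' : k ≤ n := by simpa [Nat.lt_succ_iff] using hk
    rw [if_pos (by omega), coeff_H, B_of_lt (by omega)]
    ring
end

section
/- Let p be an odd prime and m, r positive integers with p not dividing m. Then, coefficientwise in x modulo [p]: ∑_{k=0}^{p-1} (q^r;q^m)_k (q^{m-r};q^m)_k x^k / (q^m;q^m)_k^2 ≡ (-1)^{a} q^{-m·a(a+1)/2} ∑_{k=0}^{p-1} (q^r;q^m)_k (q^{m-r};q^m)_k (x;q^m)_k q^{mk} / (q^m;q^m)_k^2 (mod [p]), where a = ⟨-r/m⟩_p is the least nonnegative residue of -r·m^{-1} modulo p. -/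
open Polynomial Finset

namespace QRV

local notation "alg" => algebraMap (Polynomial ℚ) (RatFunc ℚ)

variable {K : Type} [Field K] [CharZero K] (z : K)

/-- `A` evaluates to `x` under `q ↦ z`. -/
def Rep (A : RatFunc ℚ) (x : K) : Prop :=
  ∃ f g : Polynomial ℚ, (aeval z g ≠ 0) ∧
    A * alg g = alg f ∧ aeval z f = x * aeval z g

variable {z}

theorem rep_algebraMap (f : Polynomial ℚ) : Rep z (alg f) (aeval z f) :=
  ⟨f, 1, by simp, by simp, by simp⟩

theorem rep_q : Rep z q z := by
  simpa [q, RatFunc.algebraMap_X] using rep_algebraMap (z := z) (X : Polynomial ℚ)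

theorem rep_one : Rep z 1 1 := by simpa using rep_algebraMap (z := z) 1

theorem rep_zero : Rep z 0 0 := by simpa using rep_algebraMap (z := z) 0

theorem Rep.add {A B x y} (hA : Rep z A x) (hB : Rep z B y) : Rep z (A + B) (x + y) := by
  obtain ⟨f1, g1, hg1, he1, hv1⟩ := hA
  obtain ⟨f2, g2, hg2, he2, hv2⟩ := hB
  refine ⟨f1 * g2 + f2 * g1, g1 * g2, by simp [hg1, hg2], ?_, ?_⟩
  · rw [map_add, map_mul, map_mul, map_mul]
    calc (A + B) * (alg g1 * alg g2) = (A * alg g1) * alg g2 + (B * alg g2) * alg g1 := by ring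
    _ = alg f1 * alg g2 + alg f2 * alg g1 := by rw [he1, he2]
  · rw [map_add, map_mul, map_mul, map_mul, hv1, hv2]; ring

theorem Rep.mul {A B x y} (hA : Rep z A x) (hB : Rep z B y) : Rep z (A * B) (x * y) := by
  obtain ⟨f1, g1, hg1, he1, hv1⟩ := hA
  obtain ⟨f2, g2, hg2, he2, hv2⟩ := hB
  refine ⟨f1 * f2, g1 * g2, by simp [hg1, hg2], ?_, ?_⟩
  · rw [map_mul, map_mul]
    calc (A * B) * (alg g1 * alg g2) = (A * alg g1) * (B * alg g2) := by ring
    _ = alg f1 * alg f2 := by rw [he1, he2]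
  · rw [map_mul, map_mul, hv1, hv2]; ring

theorem Rep.neg {A x} (hA : Rep z A x) : Rep z (-A) (-x) := by
  obtain ⟨f1, g1, hg1, he1, hv1⟩ := hA
  exact ⟨-f1, g1, hg1, by rw [map_neg, neg_mul, he1], by rw [map_neg, hv1]; ring⟩

theorem Rep.sub {A B x y} (hA : Rep z A x) (hB : Rep z B y) : Rep z (A - B) (x - y) := by
  simpa [sub_eq_add_neg] using hA.add hB.neg

theorem Rep.pow {A x} (hA : Rep z A x) (n : ℕ) : Rep z (A ^ n) (x ^ n) := by
  induction n with
  | zero => simpa using rep_one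
  | succ k ih => rw [pow_succ, pow_succ]; exact ih.mul hA

theorem Rep.inv {A x} (hA : Rep z A x) (hx : x ≠ 0) : Rep z A⁻¹ x⁻¹ := by
  obtain ⟨f1, g1, hg1, he1, hv1⟩ := hA
  have hf1v : aeval z f1 ≠ 0 := by rw [hv1]; exact mul_ne_zero hx hg1
  have hf1 : f1 ≠ 0 := by rintro rfl; simp at hf1v
  have hA0 : A ≠ 0 := by
    rintro rfl
    rw [zero_mul] at he1
    exact hf1 ((map_eq_zero_iff _ (RatFunc.algebraMap_injective ℚ)).mp he1.symm)
  refine ⟨g1, f1, hf1v, ?_, ?_⟩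
  · rw [← he1, ← mul_assoc, inv_mul_cancel₀ hA0, one_mul]
  · rw [hv1, ← mul_assoc, inv_mul_cancel₀ hx, one_mul]
theorem Rep.div {A B x y} (hA : Rep z A x) (hB : Rep z B y) (hy : y ≠ 0) :
    Rep z (A / B) (x / y) := by
  rw [div_eq_mul_inv, div_eq_mul_inv]; exact hA.mul (hB.inv hy)

theorem Rep.zpow {A x} (hA : Rep z A x) (hx : x ≠ 0) (n : ℤ) : Rep z (A ^ n) (x ^ n) := by
  cases n with
  | ofNat k => simpa using hA.pow k
  | negSucc k =>
      rw [zpow_negSucc, zpow_negSucc]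
      exact (hA.pow (k + 1)).inv (pow_ne_zero _ hx)

theorem rep_prod {s : Finset ℕ} {f : ℕ → RatFunc ℚ} {g : ℕ → K}
    (h : ∀ i ∈ s, Rep z (f i) (g i)) : Rep z (∏ i ∈ s, f i) (∏ i ∈ s, g i) := by
  classical
  induction s using Finset.induction_on with
  | empty => simpa using rep_one
  | insert _ _ hni ih =>
      rw [Finset.prod_insert hni, Finset.prod_insert hni]
      exact (h _ (Finset.mem_insert_self _ _)).mul
        (ih fun i hi => h i (Finset.mem_insert_of_mem hi))

theorem rep_sum {s : Finset ℕ} {f : ℕ → RatFunc ℚ} {g : ℕ → K}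
    (h : ∀ i ∈ s, Rep z (f i) (g i)) : Rep z (∑ i ∈ s, f i) (∑ i ∈ s, g i) := by
  classical
  induction s using Finset.induction_on with
  | empty => simpa using rep_zero
  | insert _ _ hni ih =>
      rw [Finset.sum_insert hni, Finset.sum_insert hni]
      exact (h _ (Finset.mem_insert_self _ _)).add
        (ih fun i hi => h i (Finset.mem_insert_of_mem hi))

theorem Rep.congr {A x y} (hA : Rep z A x) (hxy : x = y) : Rep z A y := hxy ▸ hA

/-- Functionality of `Rep`. -/
theorem Rep.unique {A x y} (hA : Rep z A x) (hB : Rep z A y) : x = y := by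
  obtain ⟨f1, g1, hg1, he1, hv1⟩ := hA
  obtain ⟨f2, g2, hg2, he2, hv2⟩ := hB
  have : alg (f1 * g2) = alg (f2 * g1) := by
    rw [map_mul, map_mul, ← he1, ← he2]; ring
  have hpoly : f1 * g2 = f2 * g1 := (RatFunc.algebraMap_injective ℚ) this
  have := congrArg (aeval z) hpoly
  rw [map_mul, map_mul, hv1, hv2] at this
  have h2 : x * (aeval z g1 * aeval z g2) = y * (aeval z g1 * aeval z g2) := by
    rw [mul_comm (aeval z g1)]
    calc x * (aeval z g2 * aeval z g1) = x * aeval z g1 * aeval z g2 := by ring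
    _ = y * aeval z g2 * aeval z g1 := this
    _ = y * (aeval z g2 * aeval z g1) := by ring
  exact mul_right_cancel₀ (mul_ne_zero hg1 hg2) h2

/-- key extraction: two rational functions with the same value at a primitive p-th root
are congruent mod `[p]`. -/
theorem modQ_of_rep {p : ℕ} [hp : Fact p.Prime] {ζ : K} (hζ : IsPrimitiveRoot ζ p)
    {A B : RatFunc ℚ} {x : K} (hA : Rep ζ A x) (hB : Rep ζ B x) : ModQ 1 p A B := by
  obtain ⟨f1, g1, hg1, he1, hv1⟩ := hA
  obtain ⟨f2, g2, hg2, he2, hv2⟩ := hB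
  set Φ : Polynomial ℚ := ∑ i ∈ Finset.range p, Polynomial.X ^ i with hΦ
  have hcyc : Φ = cyclotomic p ℚ := (cyclotomic_prime ℚ p).symm
  have hmin : Φ = minpoly ℚ ζ := by rw [hcyc]; exact cyclotomic_eq_minpoly_rat hζ hp.out.pos
  have hvanish : aeval ζ (f1 * g2 - f2 * g1) = 0 := by
    rw [map_sub, map_mul, map_mul, hv1, hv2]; ring
  have hdvd : Φ ∣ f1 * g2 - f2 * g1 := by
    rw [hmin]; exact minpoly.dvd ℚ ζ hvanish
  obtain ⟨c, hc⟩ := hdvd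
  refine ⟨c, g1 * g2, ?_, ?_⟩
  · intro hdvd'
    obtain ⟨d, hd⟩ := hdvd'
    have : aeval ζ (g1 * g2) = 0 := by
      rw [hd, map_mul]
      have : aeval ζ Φ = 0 := by
        rw [hmin]; exact minpoly.aeval ℚ ζ
      rw [this, zero_mul]
    rw [map_mul] at this
    exact (mul_ne_zero hg1 hg2) this
  · have hqint : qInt p = algebraMap (Polynomial ℚ) (RatFunc ℚ) Φ := by
      rw [hΦ, map_sum]
      simp [qInt, q, RatFunc.algebraMap_X]
    rw [pow_one, hqint, ← map_mul, ← hc, map_sub, map_mul, map_mul, map_mul, ← he1, ← he2]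
    ring

end QRV

namespace QRV

variable {K : Type} [Field K]

/-- `P w e k = ∏_{i<k} (1 - w^(e+i))`. -/
noncomputable def P (w : K) (e : ℤ) (k : ℕ) : K := ∏ i ∈ Finset.range k, (1 - w ^ (e + i))

/-- Gaussian binomial at `w`. -/
noncomputable def gb (w : K) (n k : ℕ) : K :=
  if k ≤ n then P w 1 n / (P w 1 k * P w 1 (n - k)) else 0

section basic

theorem not_dvd_cast {p x : ℕ} (h0 : 0 < x) (hx : x < p) : ¬ (p : ℤ) ∣ (x : ℤ) := by
  intro h
  have := Int.natCast_dvd_natCast.mp h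
  exact absurd (Nat.le_of_dvd h0 this) (by omega)

variable {p : ℕ} {w : K} (hw : IsPrimitiveRoot w p) (hp : 0 < p)
include hw hp

theorem w_ne_zero : w ≠ 0 := hw.ne_zero hp.ne'

theorem zpow_ne_one {e : ℤ} (he : ¬ (p : ℤ) ∣ e) : w ^ e ≠ 1 := by
  intro h
  apply he
  have hd : e = (p : ℤ) * (e / p) + e % p := (Int.mul_ediv_add_emod e p).symm
  have hw0 : w ≠ 0 := w_ne_zero hw hp
  have hmod : w ^ (e % p) = 1 := by
    have : w ^ e = w ^ ((p : ℤ) * (e / p)) * w ^ (e % p) := by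
      rw [← zpow_add₀ hw0, ← hd]
    have hp1 : w ^ ((p : ℤ) * (e / p)) = 1 := by
      rw [zpow_mul, zpow_natCast, hw.pow_eq_one, one_zpow]
    rw [this, hp1, one_mul] at h
    exact h
  have h0 : 0 ≤ e % p := Int.emod_nonneg e (by exact_mod_cast hp.ne')
  have hlt : e % p < p := Int.emod_lt_of_pos e (by exact_mod_cast hp)
  have : w ^ (e % p).toNat = 1 := by
    rw [← zpow_natCast, Int.toNat_of_nonneg h0]; exact hmod
  have := hw.dvd_of_pow_eq_one _ this
  have hdv : ((p : ℤ)) ∣ (e % p) := by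
    have := Int.natCast_dvd_natCast.mpr this
    rwa [Int.toNat_of_nonneg h0] at this
  rcases eq_or_lt_of_le h0 with h5 | h5
  · exact Int.dvd_of_emod_eq_zero h5.symm
  · exact absurd (Int.le_of_dvd h5 hdv) (by omega)

theorem one_sub_zpow_ne {e : ℤ} (he : ¬ (p : ℤ) ∣ e) : (1 : K) - w ^ e ≠ 0 := by
  intro h
  exact zpow_ne_one hw hp he (by linear_combination -h)

theorem P_ne {e k : ℕ} (he : 1 ≤ e) (hk : e + k ≤ p) : P w (e : ℤ) k ≠ 0 := by
  apply Finset.prod_ne_zero_iff.mpr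
  intro i hi
  rw [Finset.mem_range] at hi
  have : (e : ℤ) + i = ((e + i : ℕ) : ℤ) := by push_cast; ring
  rw [this]
  exact one_sub_zpow_ne hw hp (not_dvd_cast (by omega) (by omega))

end basic

theorem P_zero (w : K) (e : ℤ) : P w e 0 = 1 := by simp [P]

theorem P_succ (w : K) (e : ℤ) (k : ℕ) : P w e (k + 1) = P w e k * (1 - w ^ (e + k)) :=
  Finset.prod_range_succ _ _

theorem P_shift (w : K) (e : ℤ) (k : ℕ) : P w e (k + 1) = (1 - w ^ e) * P w (e + 1) k := by
  rw [P, Finset.prod_range_succ']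
  rw [mul_comm]
  congr 1
  · simp
  · apply Finset.prod_congr rfl
    intro i _
    congr 1
    push_cast
    ring

theorem P_add (w : K) (e : ℤ) (s t : ℕ) : P w e (s + t) = P w e s * P w (e + s) t := by
  rw [P, Finset.prod_range_add]
  congr 1
  apply Finset.prod_congr rfl
  intro i _
  congr 1
  push_cast
  ring

end QRV

namespace QRV

variable {K : Type} [Field K] {p : ℕ} {w : K} (hw : IsPrimitiveRoot w p) (hp : 0 < p)

theorem gb_of_le {n k : ℕ} (h : k ≤ n) :
    gb w n k = P w 1 n / (P w 1 k * P w 1 (n - k)) := if_pos h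

theorem gb_eq_zero {n k : ℕ} (h : n < k) : gb w n k = 0 := if_neg (by omega)

include hw hp

theorem one_sub_zpow_ne' {e : ℤ} (h1 : 0 < e) (h2 : e < p) : (1 : K) - w ^ e ≠ 0 :=
  one_sub_zpow_ne hw hp (fun hdvd => absurd (Int.le_of_dvd h1 hdvd) (by omega))

theorem P_ne_int {E : ℤ} {k : ℕ} (hE : 1 ≤ E) (hk : E + k ≤ p) : P w E k ≠ 0 := by
  apply Finset.prod_ne_zero_iff.mpr
  intro i hi
  rw [Finset.mem_range] at hi
  exact one_sub_zpow_ne' hw hp (by omega) (by omega)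

theorem gb_zero_right {n : ℕ} (hn : n < p) : gb w n 0 = 1 := by
  rw [gb_of_le (Nat.zero_le n), P_zero, one_mul, Nat.sub_zero,
    div_self (P_ne_int hw hp le_rfl (by omega))]

theorem gb_self {n : ℕ} (hn : n < p) : gb w n n = 1 := by
  rw [gb_of_le le_rfl, Nat.sub_self, P_zero, mul_one,
    div_self (P_ne_int hw hp le_rfl (by omega))]

theorem gb_pascal_aux {n k : ℕ} (hn1 : n + 1 < p) (hk : k + 1 ≤ n) :
    (P w 1 (n + 1) = P w 1 n * (1 - w ^ ((1 : ℤ) + k) * w ^ ((n : ℤ) - k)))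
    ∧ (P w 1 (k + 1) = P w 1 k * (1 - w ^ ((1 : ℤ) + k)))
    ∧ (P w 1 (n - k) = P w 1 (n - k - 1) * (1 - w ^ ((n : ℤ) - k))) := by
  have hw0 : w ≠ 0 := w_ne_zero hw hp
  have huv : w ^ ((1 : ℤ) + k) * w ^ ((n : ℤ) - k) = w ^ (1 + (n : ℤ)) := by
    rw [← zpow_add₀ hw0]; congr 1; ring
  refine ⟨?_, ?_, ?_⟩
  · rw [huv]; exact P_succ w 1 n
  · exact P_succ w 1 k
  · have e3 : n - k = (n - k - 1) + 1 := by omega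
    have h4 := P_succ w 1 (n - k - 1)
    rw [← e3] at h4
    have e4 : (1 : ℤ) + ((n - k - 1 : ℕ) : ℤ) = (n : ℤ) - k := by omega
    rw [e4] at h4
    exact h4

theorem gb_pascal1 {n : ℕ} (hn1 : n + 1 < p) (k : ℕ) :
    gb w (n + 1) (k + 1) = w ^ ((1 : ℤ) + k) * gb w n (k + 1) + gb w n k := by
  rcases le_or_gt (k + 1) n with hk | hk
  · obtain ⟨hA, hB, hC⟩ := gb_pascal_aux hw hp hn1 hk
    rw [gb_of_le (by omega), gb_of_le hk, gb_of_le (by omega)]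
    have e1 : n + 1 - (k + 1) = n - k := by omega
    have e2 : n - (k + 1) = n - k - 1 := by omega
    rw [e1, e2, hA, hB, hC]
    have hP1k : P w 1 k ≠ 0 := P_ne_int hw hp le_rfl (by omega)
    have hP1nk1 : P w 1 (n - k - 1) ≠ 0 := P_ne_int hw hp le_rfl (by omega)
    have hP1n : P w 1 n ≠ 0 := P_ne_int hw hp le_rfl (by omega)
    have hz1 : (1 : K) - w ^ ((1 : ℤ) + k) ≠ 0 := one_sub_zpow_ne' hw hp (by omega) (by omega)
    have hz2 : (1 : K) - w ^ ((n : ℤ) - k) ≠ 0 := one_sub_zpow_ne' hw hp (by omega) (by omega)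
    field_simp
    ring
  · rcases Nat.eq_or_lt_of_le (by omega : n ≤ k) with rfl | hk2
    · rw [gb_self hw hp hn1, gb_eq_zero (by omega), gb_self hw hp (by omega), mul_zero]
      ring
    · rw [gb_eq_zero (by omega), gb_eq_zero (by omega), gb_eq_zero (by omega), mul_zero]
      ring

theorem gb_pascal2 {n : ℕ} (hn1 : n + 1 < p) (k : ℕ) :
    gb w (n + 1) (k + 1) = gb w n (k + 1) + w ^ ((n : ℤ) - k) * gb w n k := by
  rcases le_or_gt (k + 1) n with hk | hk
  · obtain ⟨hA, hB, hC⟩ := gb_pascal_aux hw hp hn1 hk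
    rw [gb_of_le (by omega), gb_of_le hk, gb_of_le (by omega)]
    have e1 : n + 1 - (k + 1) = n - k := by omega
    have e2 : n - (k + 1) = n - k - 1 := by omega
    rw [e1, e2, hA, hB, hC]
    have hP1k : P w 1 k ≠ 0 := P_ne_int hw hp le_rfl (by omega)
    have hP1nk1 : P w 1 (n - k - 1) ≠ 0 := P_ne_int hw hp le_rfl (by omega)
    have hP1n : P w 1 n ≠ 0 := P_ne_int hw hp le_rfl (by omega)
    have hz1 : (1 : K) - w ^ ((1 : ℤ) + k) ≠ 0 := one_sub_zpow_ne' hw hp (by omega) (by omega)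
    have hz2 : (1 : K) - w ^ ((n : ℤ) - k) ≠ 0 := one_sub_zpow_ne' hw hp (by omega) (by omega)
    field_simp
    ring
  · rcases Nat.eq_or_lt_of_le (by omega : n ≤ k) with rfl | hk2
    · rw [gb_self hw hp hn1, gb_eq_zero (by omega), gb_self hw hp (by omega)]
      rw [sub_self, zpow_zero]
      ring
    · rw [gb_eq_zero (by omega), gb_eq_zero (by omega), gb_eq_zero (by omega), mul_zero]
      ring

end QRV

namespace QRV

variable {K : Type} [Field K] {p : ℕ} {w : K}

/-- summand of the q-Chu-Vandermonde sum -/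
noncomputable def cvT (w : K) (n : ℕ) (B C : ℤ) (i : ℕ) : K :=
  (-1) ^ i * w ^ ((i.choose 2 : ℤ) + (i : ℤ) * (1 - (n : ℤ))) * gb w n i * P w B i *
    P w (C + i) (n - i)

theorem choose_two_succ (k : ℕ) : (((k + 1).choose 2 : ℕ) : ℤ) = (k.choose 2 : ℤ) + k := by
  have : (k + 1).choose 2 = k.choose 1 + k.choose 2 := Nat.choose_succ_succ k 1
  rw [this, Nat.choose_one_right]
  push_cast
  ring

variable (hw : IsPrimitiveRoot w p) (hp : 0 < p)
include hw hp

theorem cv_step_u {n : ℕ} (hn1 : n + 1 < p) {B C : ℤ} {k : ℕ} (hk : k ≤ n) :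
    (-1 : K) ^ (k + 1) * w ^ (((k + 1).choose 2 : ℤ) + ((k : ℤ) + 1) * (1 - ((n : ℤ) + 1))) *
        (w ^ ((1 : ℤ) + k) * gb w n (k + 1)) * P w B (k + 1) * P w (C + ((k : ℤ) + 1)) (n - k)
      = (1 - w ^ (C + (n : ℤ))) * cvT w n B C (k + 1) := by
  have hw0 : w ≠ 0 := w_ne_zero hw hp
  rcases Nat.eq_or_lt_of_le hk with rfl | hlt
  · rw [gb_eq_zero (by omega : k < k + 1)]
    rw [cvT, gb_eq_zero (by omega : k < k + 1)]
    ring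
  · -- k < n
    have hsplit : P w (C + ((k : ℤ) + 1)) (n - k)
        = P w (C + ((k : ℤ) + 1)) (n - (k + 1)) * (1 - w ^ (C + (n : ℤ))) := by
      have e3 : n - k = (n - (k + 1)) + 1 := by omega
      have h4 := P_succ w (C + ((k : ℤ) + 1)) (n - (k + 1))
      have e5 : C + ((k : ℤ) + 1) + ((n - (k + 1) : ℕ) : ℤ) = C + (n : ℤ) := by omega
      rw [e5] at h4
      rw [e3, h4]
    have hexp : w ^ (((k + 1).choose 2 : ℤ) + ((k : ℤ) + 1) * (1 - ((n : ℤ) + 1)))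
          * w ^ ((1 : ℤ) + k)
        = w ^ (((k + 1).choose 2 : ℤ) + (((k + 1) : ℕ) : ℤ) * (1 - (n : ℤ))) := by
      rw [← zpow_add₀ hw0]
      congr 1
      push_cast
      ring
    rw [cvT]
    have hcast : P w (C + (((k + 1) : ℕ) : ℤ)) (n - (k + 1))
        = P w (C + ((k : ℤ) + 1)) (n - (k + 1)) := by
      congr 1
    rw [hcast]
    linear_combination ((-1 : K) ^ (k + 1) * gb w n (k + 1) * P w B (k + 1)) *
      ((w ^ (((k + 1).choose 2 : ℤ) + ((k : ℤ) + 1) * (1 - ((n : ℤ) + 1))) * w ^ ((1 : ℤ) + k)) * hsplit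
        + (1 - w ^ (C + (n : ℤ))) * P w (C + ((k : ℤ) + 1)) (n - (k + 1)) * hexp)

theorem cv_step_v {n : ℕ} {B C : ℤ} {k : ℕ} :
    (-1 : K) ^ (k + 1) * w ^ (((k + 1).choose 2 : ℤ) + ((k : ℤ) + 1) * (1 - ((n : ℤ) + 1))) *
        gb w n k * P w B (k + 1) * P w (C + ((k : ℤ) + 1)) (n - k)
      = (-(1 - w ^ B) * w ^ (-(n : ℤ))) * cvT w n (B + 1) (C + 1) k := by
  have hw0 : w ≠ 0 := w_ne_zero hw hp
  have hshift : P w B (k + 1) = (1 - w ^ B) * P w (B + 1) k := P_shift w B k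
  have hCeq : P w (C + ((k : ℤ) + 1)) (n - k) = P w ((C + 1) + (k : ℤ)) (n - k) := by
    congr 1
    ring
  have hexp2 : w ^ (((k + 1).choose 2 : ℤ) + ((k : ℤ) + 1) * (1 - ((n : ℤ) + 1)))
      = w ^ ((k.choose 2 : ℤ) + (k : ℤ) * (1 - (n : ℤ))) * w ^ (-(n : ℤ)) := by
    rw [← zpow_add₀ hw0]
    congr 1
    rw [choose_two_succ]
    ring
  rw [hCeq, cvT, pow_succ]
  linear_combination ((-1 : K) ^ k * gb w n k * P w ((C + 1) + (k : ℤ)) (n - k)) *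
    ((-1 : K) * P w B (k + 1) * hexp2
      + (-1 : K) * w ^ ((k.choose 2 : ℤ) + (k : ℤ) * (1 - (n : ℤ))) * w ^ (-(n : ℤ)) * hshift)

theorem CV : ∀ (n : ℕ), n < p → ∀ (B C : ℤ),
    ∑ i ∈ Finset.range (n + 1), cvT w n B C i = w ^ (B * n) * P w (C - B) n := by
  intro n
  induction n with
  | zero =>
      intro hn B C
      rw [Finset.sum_range_one]
      simp [cvT, P_zero, gb_self hw hp hn]
  | succ n ih =>
      intro hn B C
      have hw0 : w ≠ 0 := w_ne_zero hw hp
      have hn' : n < p := by omega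
      rw [Finset.sum_range_succ']
      have hsplit : ∀ k ∈ Finset.range (n + 1),
          cvT w (n + 1) B C (k + 1)
            = (1 - w ^ (C + (n : ℤ))) * cvT w n B C (k + 1)
              + (-(1 - w ^ B) * w ^ (-(n : ℤ))) * cvT w n (B + 1) (C + 1) k := by
        intro k hkmem
        rw [Finset.mem_range] at hkmem
        have hk' : k ≤ n := by omega
        have expand : cvT w (n + 1) B C (k + 1)
            = (-1 : K) ^ (k + 1) *
                w ^ (((k + 1).choose 2 : ℤ) + ((k : ℤ) + 1) * (1 - ((n : ℤ) + 1))) *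
                (w ^ ((1 : ℤ) + k) * gb w n (k + 1)) * P w B (k + 1) *
                P w (C + ((k : ℤ) + 1)) (n - k)
              + (-1 : K) ^ (k + 1) *
                w ^ (((k + 1).choose 2 : ℤ) + ((k : ℤ) + 1) * (1 - ((n : ℤ) + 1))) *
                gb w n k * P w B (k + 1) * P w (C + ((k : ℤ) + 1)) (n - k) := by
          rw [cvT, gb_pascal1 hw hp hn k]
          have hsub2 : (n + 1) - (k + 1) = n - k := by omega
          rw [hsub2]
          push_cast
          ring
        rw [expand, cv_step_u hw hp hn hk', cv_step_v hw hp]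
      rw [Finset.sum_congr rfl hsplit, Finset.sum_add_distrib, ← Finset.mul_sum, ← Finset.mul_sum]
      have h2 : ∑ k ∈ Finset.range (n + 1), cvT w n (B + 1) (C + 1) k
          = w ^ ((B + 1) * n) * P w (C - B) n := by
        have := ih hn' (B + 1) (C + 1)
        have he : (C + 1) - (B + 1) = C - B := by ring
        rwa [he] at this
      have h1 : ∑ k ∈ Finset.range (n + 1), cvT w n B C (k + 1)
          = w ^ (B * n) * P w (C - B) n - cvT w n B C 0 := by
        have e1 := Finset.sum_range_succ' (cvT w n B C) (n + 1)
        have e2 := Finset.sum_range_succ (cvT w n B C) (n + 1)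
        have hz : cvT w n B C (n + 1) = 0 := by
          rw [cvT, gb_eq_zero (by omega : n < n + 1)]
          ring
        have hih := ih hn' B C
        rw [hz, add_zero] at e2
        rw [e2, hih] at e1
        linear_combination -e1
      have hf0 : cvT w (n + 1) B C 0 = (1 - w ^ (C + (n : ℤ))) * cvT w n B C 0 := by
        rw [cvT, cvT, gb_zero_right hw hp hn, gb_zero_right hw hp hn']
        simp only [pow_zero, Nat.cast_zero, zero_mul, add_zero, zpow_zero, Nat.sub_zero,
          Nat.cast_ofNat, one_mul, mul_one, P_zero]
        have h0 : ((Nat.choose 0 2 : ℕ) : ℤ) = 0 := by norm_num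
        rw [h0, zpow_zero, P_succ w C n]
        ring
      rw [h1, h2, hf0]
      have hPs : P w (C - B) (n + 1) = P w (C - B) n * (1 - w ^ (C - B + (n : ℤ))) := P_succ w _ n
      rw [hPs]
      have za : w ^ (-(n : ℤ)) * w ^ ((B + 1) * (n : ℤ)) = w ^ (B * (n : ℤ)) := by
        rw [← zpow_add₀ hw0]; congr 1; ring
      have zb : w ^ (B * (((n + 1) : ℕ) : ℤ)) = w ^ (B * (n : ℤ)) * w ^ B := by
        rw [← zpow_add₀ hw0]; congr 1; push_cast; ring
      have zc : w ^ B * w ^ (C - B + (n : ℤ)) = w ^ (C + (n : ℤ)) := by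
        rw [← zpow_add₀ hw0]; congr 1; ring
      rw [zb]
      linear_combination (-(1 - w ^ B) * P w (C - B) n) * za
        + (w ^ (B * (n : ℤ)) * P w (C - B) n) * zc

end QRV

namespace QRV

variable {K : Type} [Field K] {p : ℕ} {w : K}

theorem sum_range_cast_choose (i : ℕ) :
    (∑ l ∈ Finset.range i, (l : ℤ)) = (i.choose 2 : ℤ) := by
  induction i with
  | zero => simp
  | succ k ih =>
      rw [Finset.sum_range_succ, ih, choose_two_succ]

variable (hw : IsPrimitiveRoot w p) (hp : 0 < p)
include hw hp

theorem prod_w_zpow (s : Finset ℕ) (f : ℕ → ℤ) :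
    ∏ i ∈ s, w ^ f i = w ^ (∑ i ∈ s, f i) := by
  classical
  have hw0 : w ≠ 0 := w_ne_zero hw hp
  induction s using Finset.induction_on with
  | empty => simp
  | insert _ _ hni ih =>
      rw [Finset.prod_insert hni, Finset.sum_insert hni, ih, ← zpow_add₀ hw0]

theorem P_rev (n i : ℕ) :
    P w (-(n : ℤ)) i = (-1) ^ i * w ^ ((i.choose 2 : ℤ) - (n : ℤ) * i) *
      P w ((n : ℤ) - i + 1) i := by
  have hw0 : w ≠ 0 := w_ne_zero hw hp
  have step1 : P w (-(n : ℤ)) i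
      = ∏ l ∈ Finset.range i, ((-1) * w ^ (-(n : ℤ) + l) * (1 - w ^ ((n : ℤ) - l))) := by
    apply Finset.prod_congr rfl
    intro l _
    have hmul : w ^ (-(n : ℤ) + l) * w ^ ((n : ℤ) - l) = 1 := by
      rw [← zpow_add₀ hw0]
      norm_num
    linear_combination -hmul
  rw [step1]
  have step1b : ∏ l ∈ Finset.range i, ((-1 : K) * w ^ (-(n : ℤ) + l) * (1 - w ^ ((n : ℤ) - l)))
      = ((∏ l ∈ Finset.range i, (-1 : K)) * ∏ l ∈ Finset.range i, w ^ (-(n : ℤ) + l)) *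
        ∏ l ∈ Finset.range i, (1 - w ^ ((n : ℤ) - l)) := by
    rw [← Finset.prod_mul_distrib, ← Finset.prod_mul_distrib]
  rw [step1b, prod_w_zpow hw hp]
  have step2 : (∑ l ∈ Finset.range i, (-(n : ℤ) + l)) = (i.choose 2 : ℤ) - (n : ℤ) * i := by
    rw [Finset.sum_add_distrib, sum_range_cast_choose, Finset.sum_const, Finset.card_range]
    push_cast
    ring
  have step3 : ∏ l ∈ Finset.range i, ((1 : K) - w ^ ((n : ℤ) - l))
      = P w ((n : ℤ) - i + 1) i := by
    rw [P, ← Finset.prod_range_reflect]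
    apply Finset.prod_congr rfl
    intro l hl
    rw [Finset.mem_range] at hl
    have he : (n : ℤ) - ((i - 1 - l : ℕ) : ℤ) = (n : ℤ) - (i : ℤ) + 1 + l := by omega
    rw [he]
  rw [step2, step3, Finset.prod_const, Finset.card_range]

theorem P_neg_vanish {a k : ℕ} (hak : a < k) : P w (-(a : ℤ)) k = 0 := by
  apply Finset.prod_eq_zero (Finset.mem_range.mpr hak)
  simp

theorem gb_split {j i : ℕ} (hip : j + i < p) :
    gb w (j + i) j = P w (1 + (j : ℤ)) i / P w 1 i := by
  have h1 : P w 1 (j + i) = P w 1 j * P w (1 + (j : ℤ)) i := P_add w 1 j i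
  have hj : P w 1 j ≠ 0 := P_ne_int hw hp le_rfl (by omega)
  have hi : P w 1 i ≠ 0 := P_ne_int hw hp le_rfl (by omega)
  rw [gb_of_le (by omega : j ≤ j + i)]
  have : j + i - j = i := by omega
  rw [this, h1]
  field_simp

theorem gb_CV_form {n i : ℕ} (hi : i ≤ n) (hn : n < p) :
    P w ((n : ℤ) - i + 1) i = gb w n i * P w 1 i := by
  have h1 : P w 1 n = P w 1 (n - i) * P w (1 + ((n - i : ℕ) : ℤ)) i := by
    have := P_add w 1 (n - i) i
    rw [show (n - i) + i = n by omega] at this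
    exact this
  have he : (1 : ℤ) + ((n - i : ℕ) : ℤ) = (n : ℤ) - i + 1 := by omega
  rw [he] at h1
  have hni : P w 1 (n - i) ≠ 0 := P_ne_int hw hp le_rfl (by omega)
  have hii : P w 1 i ≠ 0 := P_ne_int hw hp le_rfl (by omega)
  rw [gb_of_le hi]
  field_simp
  linear_combination -h1

end QRV

namespace QRV

variable {K : Type} [Field K] {p : ℕ} {w : K}

theorem choose2_cast (k : ℕ) : 2 * ((k.choose 2 : ℕ) : ℤ) = k * (k - 1) := by
  induction k with
  | zero => simp
  | succ t ih =>
      rw [choose_two_succ]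
      push_cast
      push_cast at ih
      linear_combination ih

variable (hw : IsPrimitiveRoot w p) (hp : 0 < p)
include hw hp

theorem IV {a j : ℕ} (ha : a < p) (hj : j ≤ a) :
    ∑ k ∈ Finset.range p,
      (P w (-(a : ℤ)) k * P w ((a : ℤ) + 1) k * w ^ k / (P w 1 k) ^ 2) * gb w k j
    = (-1 : K) ^ (a - j) * w ^ ((((a + 1).choose 2 : ℕ) : ℤ) - ((j.choose 2 : ℕ) : ℤ)) *
        (P w (-(a : ℤ)) j * P w ((a : ℤ) + 1) j / (P w 1 j) ^ 2) := by
  have hw0 : w ≠ 0 := w_ne_zero hw hp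
  obtain ⟨n, rfl⟩ : ∃ n, a = j + n := ⟨a - j, by omega⟩
  have hsub1 : j + n - j = n := by omega
  rw [hsub1]
  set a := j + n with hadef
  clear_value a
  set f : ℕ → K := fun k =>
    (P w (-(a : ℤ)) k * P w ((a : ℤ) + 1) k * w ^ k / (P w 1 k) ^ 2) * gb w k j with hf
  have stepA : ∑ k ∈ Finset.range p, f k = ∑ k ∈ Finset.Ico j (a + 1), f k := by
    refine (Finset.sum_subset ?_ ?_).symm
    · intro x hx
      rw [Finset.mem_Ico] at hx
      rw [Finset.mem_range]
      omega
    · intro k _ hk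
      rw [Finset.mem_Ico] at hk
      rw [hf]
      simp only
      rcases lt_or_ge k j with h | h
      · rw [gb_eq_zero h, mul_zero]
      · have : a < k := by omega
        rw [P_neg_vanish hw hp this]
        simp
  have stepB : ∑ k ∈ Finset.Ico j (a + 1), f k = ∑ i ∈ Finset.range (n + 1), f (j + i) := by
    rw [Finset.sum_Ico_eq_sum_range, show a + 1 - j = n + 1 by omega]
  set μ : K := P w (-(a : ℤ)) j * P w ((a : ℤ) + 1) j / (P w 1 j) ^ 2 * w ^ j /
    P w ((j : ℤ) + 1) n with hμ
  have stepC : ∀ i ∈ Finset.range (n + 1),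
      f (j + i) = μ * cvT w n ((a : ℤ) + j + 1) ((j : ℤ) + 1) i := by
    intro i hi
    rw [Finset.mem_range] at hi
    have hin : i ≤ n := by omega
    have hjip : j + i < p := by omega
    have hnp : n < p := by omega
    have hc : (1 : ℤ) + (j : ℤ) = (j : ℤ) + 1 := by ring
    have e1 : P w (-(a : ℤ)) (j + i) = P w (-(a : ℤ)) j * P w (-((n : ℕ) : ℤ)) i := by
      have h := P_add w (-(a : ℤ)) j i
      rw [show -(a : ℤ) + (j : ℤ) = -((n : ℕ) : ℤ) by omega] at h
      exact h
    have e2 : P w ((a : ℤ) + 1) (j + i) = P w ((a : ℤ) + 1) j * P w ((a : ℤ) + j + 1) i := by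
      have h := P_add w ((a : ℤ) + 1) j i
      rw [show (a : ℤ) + 1 + (j : ℤ) = (a : ℤ) + j + 1 by ring] at h
      exact h
    have e3 : P w 1 (j + i) = P w 1 j * P w ((j : ℤ) + 1) i := by
      have h := P_add w 1 j i
      rw [show (1 : ℤ) + (j : ℤ) = (j : ℤ) + 1 by ring] at h
      exact h
    have e4 : gb w (j + i) j = P w ((j : ℤ) + 1) i / P w 1 i := by
      have h := gb_split hw hp hjip
      rw [hc] at h
      exact h
    have e5 : P w (-((n : ℕ) : ℤ)) i
        = (-1) ^ i * w ^ ((i.choose 2 : ℤ) - (n : ℤ) * i) * (gb w n i * P w 1 i) := by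
      rw [P_rev hw hp n i, gb_CV_form hw hp hin hnp]
    have hPj1i : P w ((j : ℤ) + 1) i ≠ 0 := P_ne_int hw hp (by omega) (by push_cast; omega)
    have hPj1n : P w ((j : ℤ) + 1) n ≠ 0 := P_ne_int hw hp (by omega) (by push_cast; omega)
    have hP1j : P w 1 j ≠ 0 := P_ne_int hw hp le_rfl (by omega)
    have hP1i : P w 1 i ≠ 0 := P_ne_int hw hp le_rfl (by omega)
    have e6 : P w ((j : ℤ) + 1 + i) (n - i) = P w ((j : ℤ) + 1) n / P w ((j : ℤ) + 1) i := by
      have h := P_add w ((j : ℤ) + 1) i (n - i)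
      rw [show i + (n - i) = n by omega] at h
      rw [eq_div_iff hPj1i]
      linear_combination -h
    have z2 : w ^ ((i.choose 2 : ℤ) - (n : ℤ) * i) * w ^ (i : ℕ)
        = w ^ ((i.choose 2 : ℤ) + (i : ℤ) * (1 - (n : ℤ))) := by
      rw [← zpow_natCast w i, ← zpow_add₀ hw0]
      congr 1
      ring
    rw [hf]
    simp only
    rw [e1, e2, e3, e4, e5, cvT, e6, hμ, pow_add]
    field_simp
    linear_combination (P w (-(a : ℤ)) j * gb w n i * P w ((a : ℤ) + 1) j *
      P w ((a : ℤ) + j + 1) i) * z2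
  rw [stepA, stepB, Finset.sum_congr rfl stepC, ← Finset.mul_sum,
    CV hw hp n (by omega) ((a : ℤ) + j + 1) ((j : ℤ) + 1)]
  rw [show ((j : ℤ) + 1) - ((a : ℤ) + j + 1) = -(a : ℤ) by ring]
  rw [P_rev hw hp a n, show (a : ℤ) - (n : ℤ) + 1 = (j : ℤ) + 1 by omega]
  have hPj1n : P w ((j : ℤ) + 1) n ≠ 0 := P_ne_int hw hp (by omega) (by push_cast; omega)
  have hP1j : P w 1 j ≠ 0 := P_ne_int hw hp le_rfl (by omega)
  rw [hμ]
  have zfinal : w ^ (j : ℕ) * (w ^ (((a : ℤ) + j + 1) * n) * w ^ ((n.choose 2 : ℤ) - (a : ℤ) * n))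
      = w ^ ((((a + 1).choose 2 : ℕ) : ℤ) - ((j.choose 2 : ℕ) : ℤ)) := by
    rw [← zpow_natCast w j, ← zpow_add₀ hw0, ← zpow_add₀ hw0]
    congr 1
    have c1 := choose2_cast n
    have c2 := choose2_cast j
    have c3 := choose2_cast (a + 1)
    have haj : (a : ℤ) = (n : ℤ) + (j : ℤ) := by omega
    apply mul_left_cancel₀ (by norm_num : (2 : ℤ) ≠ 0)
    push_cast at c1 c2 c3 ⊢
    linear_combination c1 + c2 - c3 - ((a : ℤ) + (n : ℤ) + (j : ℤ) + 1) * haj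
  field_simp
  linear_combination (P w (-(a : ℤ)) j * P w ((a : ℤ) + 1) j) * zfinal

end QRV

namespace QRV

variable {K : Type} [Field K] {p : ℕ} {w : K} (hw : IsPrimitiveRoot w p) (hp : 0 < p)
include hw hp

/-- coefficient of `X^j` in `∏_{i<k} (1 - w^i X)`. -/
theorem E_poly {k : ℕ} (hk : k < p) : ∀ j : ℕ,
    (∏ i ∈ Finset.range k, (1 - Polynomial.C (w ^ i) * Polynomial.X)).coeff j
      = (-1) ^ j * w ^ ((j.choose 2 : ℕ) : ℤ) * gb w k j := by
  have hw0 : w ≠ 0 := w_ne_zero hw hp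
  induction k with
  | zero =>
      intro j
      rw [Finset.prod_range_zero]
      rcases j with _ | t
      · simp [gb_self hw hp hp]
      · rw [Polynomial.coeff_one]
        rw [gb_eq_zero (by omega)]
        simp
  | succ k ih =>
      intro j
      have hk' : k < p := by omega
      have hexpand : ∏ i ∈ Finset.range (k + 1), (1 - Polynomial.C (w ^ i) * Polynomial.X)
          = (∏ i ∈ Finset.range k, (1 - Polynomial.C (w ^ i) * Polynomial.X))
            - Polynomial.C (w ^ k) *
              ((∏ i ∈ Finset.range k, (1 - Polynomial.C (w ^ i) * Polynomial.X)) *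
                Polynomial.X) := by
        rw [Finset.prod_range_succ]
        ring
      rw [hexpand]
      rcases j with _ | t
      · rw [Polynomial.coeff_sub, Polynomial.coeff_C_mul, Polynomial.mul_coeff_zero,
          Polynomial.coeff_X_zero, mul_zero, mul_zero, sub_zero, ih hk' 0,
          gb_zero_right hw hp hk', gb_zero_right hw hp hk]
      · rw [Polynomial.coeff_sub, Polynomial.coeff_C_mul, Polynomial.coeff_mul_X,
          ih hk' (t + 1), ih hk' t, gb_pascal2 hw hp hk t]
        have zE : (w ^ k) * w ^ ((t.choose 2 : ℕ) : ℤ)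
            = w ^ (((t + 1).choose 2 : ℕ) : ℤ) * w ^ ((k : ℤ) - t) := by
          rw [← zpow_natCast w k, ← zpow_add₀ hw0, ← zpow_add₀ hw0]
          congr 1
          rw [choose_two_succ]
          ring
        have hsign : (-1 : K) ^ (t + 1) = (-1) * (-1) ^ t := by
          rw [pow_succ]
          ring
        rw [hsign]
        linear_combination -((-1 : K) ^ t * gb w k t) * zE

/-- The final value identity: coefficientwise form of the theorem at the root of unity. -/
theorem VIL {a : ℕ} (ha : a < p) (j : ℕ) :
    (if j < p then P w (-(a : ℤ)) j * P w ((a : ℤ) + 1) j / (P w 1 j) ^ 2 else 0)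
      = ((-1 : K) ^ a * (w ^ ((a * (a + 1)) / 2))⁻¹) *
        ∑ k ∈ Finset.range p,
          (P w (-(a : ℤ)) k * P w ((a : ℤ) + 1) k * w ^ k / (P w 1 k) ^ 2) *
            ((-1) ^ j * w ^ ((j.choose 2 : ℕ) : ℤ) * gb w k j) := by
  have hw0 : w ≠ 0 := w_ne_zero hw hp
  rcases le_or_gt j a with hj | hja
  · -- main case j ≤ a
    rw [if_pos (by omega)]
    have hcomm : ∑ k ∈ Finset.range p,
        (P w (-(a : ℤ)) k * P w ((a : ℤ) + 1) k * w ^ k / (P w 1 k) ^ 2) *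
          ((-1) ^ j * w ^ ((j.choose 2 : ℕ) : ℤ) * gb w k j)
        = ((-1) ^ j * w ^ ((j.choose 2 : ℕ) : ℤ)) * ∑ k ∈ Finset.range p,
            (P w (-(a : ℤ)) k * P w ((a : ℤ) + 1) k * w ^ k / (P w 1 k) ^ 2) * gb w k j := by
      rw [Finset.mul_sum]
      apply Finset.sum_congr rfl
      intro k _
      ring
    rw [hcomm, IV hw hp ha hj]
    have hT : w ^ ((a * (a + 1)) / 2) = w ^ ((((a + 1).choose 2 : ℕ) : ℤ)) := by
      rw [← zpow_natCast w ((a * (a + 1)) / 2)]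
      congr 1
      have : (a * (a + 1)) / 2 = (a + 1).choose 2 := by
        rw [Nat.choose_two_right, Nat.succ_sub_one, Nat.mul_comm]
      rw [this]
    rw [hT]
    have hzT : w ^ ((((a + 1).choose 2 : ℕ) : ℤ)) ≠ 0 := zpow_ne_zero _ hw0
    have hsigns : (-1 : K) ^ a * ((-1 : K) ^ j * (-1 : K) ^ (a - j)) = 1 := by
      rw [← pow_add, ← pow_add]
      have : a + (j + (a - j)) = 2 * a := by omega
      rw [this, pow_mul]
      norm_num
    have hzmerge : w ^ ((j.choose 2 : ℕ) : ℤ) * w ^ ((((a + 1).choose 2 : ℕ) : ℤ) - ((j.choose 2 : ℕ) : ℤ))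
        = w ^ ((((a + 1).choose 2 : ℕ) : ℤ)) := by
      rw [← zpow_add₀ hw0]
      congr 1
      ring
    rw [eq_comm]
    calc ((-1 : K) ^ a * (w ^ ((((a + 1).choose 2 : ℕ) : ℤ)))⁻¹) *
          (((-1 : K) ^ j * w ^ ((j.choose 2 : ℕ) : ℤ)) *
            ((-1 : K) ^ (a - j) * w ^ ((((a + 1).choose 2 : ℕ) : ℤ) - ((j.choose 2 : ℕ) : ℤ)) *
              (P w (-(a : ℤ)) j * P w ((a : ℤ) + 1) j / (P w 1 j) ^ 2)))
        = (((-1 : K) ^ a * ((-1 : K) ^ j * (-1 : K) ^ (a - j))) *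
            ((w ^ ((j.choose 2 : ℕ) : ℤ) *
                w ^ ((((a + 1).choose 2 : ℕ) : ℤ) - ((j.choose 2 : ℕ) : ℤ))) *
              (w ^ ((((a + 1).choose 2 : ℕ) : ℤ)))⁻¹)) *
            (P w (-(a : ℤ)) j * P w ((a : ℤ) + 1) j / (P w 1 j) ^ 2) := by ring
      _ = (1 * (w ^ ((((a + 1).choose 2 : ℕ) : ℤ)) * (w ^ ((((a + 1).choose 2 : ℕ) : ℤ)))⁻¹)) *
            (P w (-(a : ℤ)) j * P w ((a : ℤ) + 1) j / (P w 1 j) ^ 2) := by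
          rw [hsigns, hzmerge]
      _ = P w (-(a : ℤ)) j * P w ((a : ℤ) + 1) j / (P w 1 j) ^ 2 := by
          rw [mul_inv_cancel₀ hzT]
          ring
  · -- j > a : both sides vanish
    have hsum : ∀ k ∈ Finset.range p,
        (P w (-(a : ℤ)) k * P w ((a : ℤ) + 1) k * w ^ k / (P w 1 k) ^ 2) *
          ((-1) ^ j * w ^ ((j.choose 2 : ℕ) : ℤ) * gb w k j) = 0 := by
      intro k _
      rcases le_or_gt k a with h | h
      · rw [gb_eq_zero (by omega)]
        ring
      · rw [P_neg_vanish hw hp h]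
        ring
    rw [Finset.sum_congr rfl hsum, Finset.sum_const, smul_zero, mul_zero]
    rcases lt_or_ge j p with h | h
    · rw [if_pos h, P_neg_vanish hw hp hja]
      ring
    · rw [if_neg (by omega)]

end QRV


namespace QRV

theorem rep_prod_linear {K : Type} [Field K] [CharZero K] {z : K} {u : ℕ → RatFunc ℚ}
    {v : ℕ → K} (h : ∀ i, Rep z (u i) (v i)) (k : ℕ) : ∀ j,
    Rep z ((∏ i ∈ Finset.range k, (1 - Polynomial.C (u i) * Polynomial.X)).coeff j)
      ((∏ i ∈ Finset.range k, (1 - Polynomial.C (v i) * Polynomial.X)).coeff j) := by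
  induction k with
  | zero =>
      intro j
      rw [Finset.prod_range_zero, Finset.prod_range_zero]
      rcases j with _ | t
      · rw [Polynomial.coeff_one, Polynomial.coeff_one]
        simpa using rep_one
      · rw [Polynomial.coeff_one, Polynomial.coeff_one]
        simpa using rep_zero
  | succ k ih =>
      intro j
      have hexp1 : (∏ i ∈ Finset.range (k + 1), (1 - Polynomial.C (u i) * Polynomial.X))
          = (∏ i ∈ Finset.range k, (1 - Polynomial.C (u i) * Polynomial.X))
            - Polynomial.C (u k) *
              ((∏ i ∈ Finset.range k, (1 - Polynomial.C (u i) * Polynomial.X)) *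
                Polynomial.X) := by
        rw [Finset.prod_range_succ]; ring
      have hexp2 : (∏ i ∈ Finset.range (k + 1), (1 - Polynomial.C (v i) * Polynomial.X))
          = (∏ i ∈ Finset.range k, (1 - Polynomial.C (v i) * Polynomial.X))
            - Polynomial.C (v k) *
              ((∏ i ∈ Finset.range k, (1 - Polynomial.C (v i) * Polynomial.X)) *
                Polynomial.X) := by
        rw [Finset.prod_range_succ]; ring
      rw [hexp1, hexp2]
      rcases j with _ | t
      · simp only [Polynomial.coeff_sub, Polynomial.coeff_C_mul, Polynomial.mul_coeff_zero,
          Polynomial.coeff_X_zero, mul_zero, sub_zero]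
        exact ih 0
      · rw [Polynomial.coeff_sub, Polynomial.coeff_sub, Polynomial.coeff_C_mul,
          Polynomial.coeff_C_mul, Polynomial.coeff_mul_X, Polynomial.coeff_mul_X]
        exact (ih (t + 1)).sub ((h k).mul (ih t))

end QRV

open QRV in
/-- Theorem 3.1: coefficientwise in `x` mod `[p]`, with `a = ⟨-r/m⟩_p`,
`∑_{k<p} (q^r;q^m)_k (q^{m-r};q^m)_k x^k / (q^m;q^m)_k²
 ≡ (-1)^a q^{-m a(a+1)/2} ∑_{k<p} (q^r;q^m)_k (q^{m-r};q^m)_k (x;q^m)_k q^{mk}/(q^m;q^m)_k²`. -/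
theorem q_rv_general (p m r : ℕ) [Fact p.Prime] (hodd : Odd p)
    (hm : 0 < m) (hr : 0 < r) (hpm : ¬ p ∣ m)
    (a : ℕ) (ha : a = ZMod.val (-(r : ZMod p) / (m : ZMod p))) :
    ∀ j : ℕ, ModQ 1 p
      ((∑ k ∈ Finset.range p,
          Polynomial.C (qPoch (q ^ r) (q ^ m) k * qPoch (q ^ ((m : ℤ) - r)) (q ^ m) k /
              qPoch (q ^ m) (q ^ m) k ^ 2) *
            Polynomial.X ^ k : Polynomial (RatFunc ℚ)).coeff j)
      ((Polynomial.C ((-1 : RatFunc ℚ) ^ a * (q ^ (m * (a * (a + 1)) / 2))⁻¹) *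
          ∑ k ∈ Finset.range p,
            Polynomial.C (qPoch (q ^ r) (q ^ m) k * qPoch (q ^ ((m : ℤ) - r)) (q ^ m) k *
                q ^ (m * k) / qPoch (q ^ m) (q ^ m) k ^ 2) *
              ∏ i ∈ Finset.range k,
                (1 - Polynomial.C ((q ^ m) ^ i) * Polynomial.X) :
          Polynomial (RatFunc ℚ)).coeff j) := by
  intro j
  have hp : p.Prime := Fact.out
  have hp0 : 0 < p := hp.pos
  haveI : NeZero p := ⟨hp.ne_zero⟩
  set K : Type := CyclotomicField p ℚ with hK
  have hζprim : IsPrimitiveRoot (letI := CyclotomicField.algebra p ℚ; IsCyclotomicExtension.zeta p ℚ (CyclotomicField p ℚ)) p :=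
    (letI := CyclotomicField.algebra p ℚ; IsCyclotomicExtension.zeta_spec p ℚ (CyclotomicField p ℚ))
  set ζ : K := (letI := CyclotomicField.algebra p ℚ; IsCyclotomicExtension.zeta p ℚ (CyclotomicField p ℚ)) with hζdef
  set w : K := ζ ^ m with hwdef
  have hw : IsPrimitiveRoot w p := hζprim.pow_of_coprime m
    ((Nat.Prime.coprime_iff_not_dvd hp).mpr hpm).symm
  have hζ0 : ζ ≠ 0 := hζprim.ne_zero hp0.ne'
  have hw0 : w ≠ 0 := w_ne_zero hw hp0
  have halt : a < p := by rw [ha]; exact ZMod.val_lt _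
  have hdvd : p ∣ r + m * a := by
    have hm0 : (m : ZMod p) ≠ 0 := by
      intro h
      exact hpm ((ZMod.natCast_eq_zero_iff m p).mp h)
    have hcast : ((a : ℕ) : ZMod p) = -(r : ZMod p) / (m : ZMod p) := by
      rw [ha]; exact ZMod.natCast_rightInverse _
    have h0 : ((r + m * a : ℕ) : ZMod p) = 0 := by
      push_cast
      rw [hcast]
      field_simp
      ring
    exact (ZMod.natCast_eq_zero_iff _ p).mp h0
  have hζr : (ζ : K) ^ r = w ^ (-(a : ℤ)) := by
    have h1 : ζ ^ r * w ^ a = 1 := by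
      rw [hwdef, ← pow_mul, ← pow_add]
      exact (hζprim.pow_eq_one_iff_dvd _).mpr hdvd
    have h2 : ζ ^ r = (w ^ a)⁻¹ := eq_inv_of_mul_eq_one_left (by linear_combination h1)
    rw [h2, ← zpow_natCast w a, ← zpow_neg]
  have hfac1 : ∀ i : ℕ, (1 : K) - ζ ^ r * (ζ ^ m) ^ i = 1 - w ^ (-(a : ℤ) + (i : ℤ)) := by
    intro i
    rw [hζr, ← hwdef, ← zpow_natCast w i, ← zpow_add₀ hw0]
  have hzm : (ζ : K) ^ ((m : ℤ) - (r : ℤ)) = w ^ ((a : ℤ) + 1) := by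
    have hm' : (ζ : K) ^ ((m : ℕ) : ℤ) = w := by rw [zpow_natCast, ← hwdef]
    calc (ζ : K) ^ ((m : ℤ) - (r : ℤ)) = ζ ^ ((m : ℕ) : ℤ) * (ζ ^ ((r : ℕ) : ℤ))⁻¹ := by
          rw [zpow_sub₀ hζ0, div_eq_mul_inv]
      _ = w * (w ^ (-(a : ℤ)))⁻¹ := by rw [hm', zpow_natCast, hζr]
      _ = w ^ (1 : ℤ) * w ^ ((a : ℤ)) := by rw [zpow_neg, inv_inv, zpow_one]
      _ = w ^ ((a : ℤ) + 1) := by rw [← zpow_add₀ hw0]; congr 1; ring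
  have hfac2 : ∀ i : ℕ, (1 : K) - ζ ^ ((m : ℤ) - (r : ℤ)) * (ζ ^ m) ^ i
      = 1 - w ^ (((a : ℤ) + 1) + (i : ℤ)) := by
    intro i
    rw [hzm, ← hwdef, ← zpow_natCast w i, ← zpow_add₀ hw0]
  have hfac3 : ∀ i : ℕ, (1 : K) - ζ ^ m * (ζ ^ m) ^ i = 1 - w ^ ((1 : ℤ) + (i : ℤ)) := by
    intro i
    rw [← hwdef, ← zpow_natCast w i]
    nth_rewrite 1 [← zpow_one w]
    rw [← zpow_add₀ hw0]
  -- Rep of the three Pochhammer products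
  have repPoch1 : ∀ k : ℕ, Rep ζ (qPoch (q ^ r) (q ^ m) k) (P w (-(a : ℤ)) k) := by
    intro k
    rw [qPoch, P]
    exact rep_prod fun i _ =>
      (rep_one.sub ((rep_q.pow r).mul ((rep_q.pow m).pow i))).congr (hfac1 i)
  have repPoch2 : ∀ k : ℕ, Rep ζ (qPoch (q ^ ((m : ℤ) - r)) (q ^ m) k)
      (P w ((a : ℤ) + 1) k) := by
    intro k
    rw [qPoch, P]
    exact rep_prod fun i _ =>
      (rep_one.sub ((rep_q.zpow hζ0 ((m : ℤ) - r)).mul ((rep_q.pow m).pow i))).congr (hfac2 i)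
  have repPoch3 : ∀ k : ℕ, Rep ζ (qPoch (q ^ m) (q ^ m) k) (P w 1 k) := by
    intro k
    rw [qPoch, P]
    exact rep_prod fun i _ =>
      (rep_one.sub ((rep_q.pow m).mul ((rep_q.pow m).pow i))).congr (hfac3 i)
  have hP1ne : ∀ k, k < p → (P w 1 k) ^ 2 ≠ 0 := by
    intro k hk
    exact pow_ne_zero 2 (P_ne_int hw hp0 le_rfl (by omega))
  -- Rep of the left-hand coefficient
  have hAcoeff : ((∑ k ∈ Finset.range p,
      Polynomial.C (qPoch (q ^ r) (q ^ m) k * qPoch (q ^ ((m : ℤ) - r)) (q ^ m) k /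
          qPoch (q ^ m) (q ^ m) k ^ 2) *
        Polynomial.X ^ k : Polynomial (RatFunc ℚ))).coeff j
      = ∑ k ∈ Finset.range p,
          (qPoch (q ^ r) (q ^ m) k * qPoch (q ^ ((m : ℤ) - r)) (q ^ m) k /
            qPoch (q ^ m) (q ^ m) k ^ 2) * (if j = k then 1 else 0) := by
    rw [Polynomial.finset_sum_coeff]
    apply Finset.sum_congr rfl
    intro k _
    rw [Polynomial.coeff_C_mul, Polynomial.coeff_X_pow]
  have repA : Rep ζ ((∑ k ∈ Finset.range p,
      Polynomial.C (qPoch (q ^ r) (q ^ m) k * qPoch (q ^ ((m : ℤ) - r)) (q ^ m) k /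
          qPoch (q ^ m) (q ^ m) k ^ 2) *
        Polynomial.X ^ k : Polynomial (RatFunc ℚ)).coeff j)
      (∑ k ∈ Finset.range p,
        (P w (-(a : ℤ)) k * P w ((a : ℤ) + 1) k / (P w 1 k) ^ 2) * (if j = k then 1 else 0)) := by
    rw [hAcoeff]
    apply rep_sum
    intro k hk
    rw [Finset.mem_range] at hk
    have base : Rep ζ (qPoch (q ^ r) (q ^ m) k * qPoch (q ^ ((m : ℤ) - r)) (q ^ m) k /
        qPoch (q ^ m) (q ^ m) k ^ 2)
        (P w (-(a : ℤ)) k * P w ((a : ℤ) + 1) k / (P w 1 k) ^ 2) :=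
      ((repPoch1 k).mul (repPoch2 k)).div ((repPoch3 k).pow 2) (hP1ne k hk)
    rcases eq_or_ne j k with rfl | hne
    · rw [if_pos rfl, if_pos rfl]
      exact base.mul rep_one
    · rw [if_neg hne, if_neg hne]
      exact base.mul rep_zero
  have hAval : (∑ k ∈ Finset.range p,
        (P w (-(a : ℤ)) k * P w ((a : ℤ) + 1) k / (P w 1 k) ^ 2) * (if j = k then 1 else 0))
      = (if j < p then P w (-(a : ℤ)) j * P w ((a : ℤ) + 1) j / (P w 1 j) ^ 2 else 0) := by
    have h1 : ∀ k ∈ Finset.range p,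
        (P w (-(a : ℤ)) k * P w ((a : ℤ) + 1) k / (P w 1 k) ^ 2) * (if j = k then 1 else 0)
        = (if j = k then P w (-(a : ℤ)) k * P w ((a : ℤ) + 1) k / (P w 1 k) ^ 2 else 0) := by
      intro k _
      split_ifs <;> ring
    rw [Finset.sum_congr rfl h1, Finset.sum_ite_eq]
    simp [Finset.mem_range]
  -- Rep of the right-hand coefficient
  have hBcoeff : ((Polynomial.C ((-1 : RatFunc ℚ) ^ a * (q ^ (m * (a * (a + 1)) / 2))⁻¹) *
      ∑ k ∈ Finset.range p,
        Polynomial.C (qPoch (q ^ r) (q ^ m) k * qPoch (q ^ ((m : ℤ) - r)) (q ^ m) k *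
            q ^ (m * k) / qPoch (q ^ m) (q ^ m) k ^ 2) *
          ∏ i ∈ Finset.range k,
            (1 - Polynomial.C ((q ^ m) ^ i) * Polynomial.X) :
      Polynomial (RatFunc ℚ))).coeff j
      = ((-1 : RatFunc ℚ) ^ a * (q ^ (m * (a * (a + 1)) / 2))⁻¹) *
        ∑ k ∈ Finset.range p,
          (qPoch (q ^ r) (q ^ m) k * qPoch (q ^ ((m : ℤ) - r)) (q ^ m) k *
            q ^ (m * k) / qPoch (q ^ m) (q ^ m) k ^ 2) *
          ((∏ i ∈ Finset.range k,
            (1 - Polynomial.C ((q ^ m) ^ i) * Polynomial.X) : Polynomial (RatFunc ℚ)).coeff j) := by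
    rw [Polynomial.coeff_C_mul, Polynomial.finset_sum_coeff]
    congr 1
    apply Finset.sum_congr rfl
    intro k _
    rw [Polynomial.coeff_C_mul]
  have hcstval : (((ζ : K) ^ (m * (a * (a + 1)) / 2))⁻¹ : K) = (w ^ ((a * (a + 1)) / 2))⁻¹ := by
    have h2 : 2 ∣ a * (a + 1) := (Nat.even_mul_succ_self a).two_dvd
    rw [Nat.mul_div_assoc m h2, pow_mul, ← hwdef]
  have repB : Rep ζ ((Polynomial.C ((-1 : RatFunc ℚ) ^ a * (q ^ (m * (a * (a + 1)) / 2))⁻¹) *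
      ∑ k ∈ Finset.range p,
        Polynomial.C (qPoch (q ^ r) (q ^ m) k * qPoch (q ^ ((m : ℤ) - r)) (q ^ m) k *
            q ^ (m * k) / qPoch (q ^ m) (q ^ m) k ^ 2) *
          ∏ i ∈ Finset.range k,
            (1 - Polynomial.C ((q ^ m) ^ i) * Polynomial.X) :
      Polynomial (RatFunc ℚ)).coeff j)
      (((-1 : K) ^ a * (w ^ ((a * (a + 1)) / 2))⁻¹) *
        ∑ k ∈ Finset.range p,
          (P w (-(a : ℤ)) k * P w ((a : ℤ) + 1) k * w ^ k / (P w 1 k) ^ 2) *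
          ((∏ i ∈ Finset.range k,
            (1 - Polynomial.C (w ^ i) * Polynomial.X) : Polynomial K).coeff j)) := by
    rw [hBcoeff]
    apply Rep.mul
    · exact ((rep_one.neg.pow a).mul
        (((rep_q.pow (m * (a * (a + 1)) / 2)).inv (pow_ne_zero _ hζ0)).congr hcstval))
    · apply rep_sum
      intro k hk
      rw [Finset.mem_range] at hk
      have hq : Rep ζ (q ^ (m * k)) ((w : K) ^ k) := by
        have h := rep_q.pow (z := ζ) (m * k)
        refine h.congr ?_
        rw [pow_mul, ← hwdef]
      have base : Rep ζ (qPoch (q ^ r) (q ^ m) k * qPoch (q ^ ((m : ℤ) - r)) (q ^ m) k *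
          q ^ (m * k) / qPoch (q ^ m) (q ^ m) k ^ 2)
          (P w (-(a : ℤ)) k * P w ((a : ℤ) + 1) k * w ^ k / (P w 1 k) ^ 2) :=
        (((repPoch1 k).mul (repPoch2 k)).mul hq).div ((repPoch3 k).pow 2) (hP1ne k hk)
      refine base.mul ?_
      exact rep_prod_linear (fun i => ((rep_q.pow m).pow i).congr (by rw [← hwdef])) k j
  -- bridge the two values using the root-of-unity identity
  have hEK : ∀ k ∈ Finset.range p,
      (P w (-(a : ℤ)) k * P w ((a : ℤ) + 1) k * w ^ k / (P w 1 k) ^ 2) *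
        ((∏ i ∈ Finset.range k,
          (1 - Polynomial.C (w ^ i) * Polynomial.X) : Polynomial K).coeff j)
      = (P w (-(a : ℤ)) k * P w ((a : ℤ) + 1) k * w ^ k / (P w 1 k) ^ 2) *
        ((-1) ^ j * w ^ ((j.choose 2 : ℕ) : ℤ) * gb w k j) := by
    intro k hk
    rw [Finset.mem_range] at hk
    rw [E_poly hw hp0 hk j]
  have hfinal : (if j < p then P w (-(a : ℤ)) j * P w ((a : ℤ) + 1) j / (P w 1 j) ^ 2 else 0)
      = (((-1 : K) ^ a * (w ^ ((a * (a + 1)) / 2))⁻¹) *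
        ∑ k ∈ Finset.range p,
          (P w (-(a : ℤ)) k * P w ((a : ℤ) + 1) k * w ^ k / (P w 1 k) ^ 2) *
          ((∏ i ∈ Finset.range k,
            (1 - Polynomial.C (w ^ i) * Polynomial.X) : Polynomial K).coeff j)) := by
    rw [Finset.sum_congr rfl hEK]
    exact VIL hw hp0 halt j
  exact modQ_of_rep hζprim (repA.congr (hAval.trans hfinal)) repB
end

section
/- Let p be an odd prime and m, r positive integers with p ∤ m, and set a = ⟨-r/m⟩_p, the least nonnegative residue of -r·m^{-1} mod p. Then, coefficientwise in x, ∑_{k=0}^{p-1} (q^r;q^m)_k (q^{m-r};q^m)_k x^k / (q^m;q^m)_k^2 ≡ ∑_{k=0}^{a} qbinom(a,k;q^m)^2 q^{m·k(k-1)/2 - m·k·a} (-x)^k (x;q^m)_{a-k} (mod [p]). -/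
open Polynomial Finset

/-- Gaussian binomial via Pascal recursion (form B). -/
noncomputable def gb {R : Type*} [CommRing R] (w : R) : ℕ → ℕ → R
  | _, 0 => 1
  | 0, _+1 => 0
  | n+1, k+1 => gb w n (k+1) + w ^ (n - k) * gb w n k

variable {R : Type*} [CommRing R] (w : R)

@[simp] lemma gb_zero_right (n : ℕ) : gb w n 0 = 1 := by cases n <;> rfl

@[simp] lemma gb_zero_succ (k : ℕ) : gb w 0 (k+1) = 0 := rfl

lemma gb_succ_succ (n k : ℕ) : gb w (n+1) (k+1) = gb w n (k+1) + w ^ (n - k) * gb w n k := rfl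

lemma gb_eq_zero : ∀ {n k : ℕ}, n < k → gb w n k = 0 := by
  intro n
  induction n with
  | zero => intro k hk; match k, hk with | k+1, _ => rfl
  | succ n ih =>
    intro k hk
    match k, hk with
    | k+1, hk =>
      rw [gb_succ_succ, ih (by omega), ih (by omega), mul_zero, add_zero]

lemma choose_two_succ (t : ℕ) : (t+1).choose 2 = t.choose 2 + t := by
  rw [Nat.choose_succ_succ, Nat.choose_one_right, add_comm]

/-- q-binomial theorem, coefficient form. -/
lemma coeff_prod_one_sub (n : ℕ) :
    ∀ t, (∏ i ∈ range n, (1 - C (w^i) * X)).coeff t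
      = (-1)^t * w^(t.choose 2) * gb w n t := by
  induction n with
  | zero =>
    intro t
    cases t with
    | zero => simp
    | succ t => simp [coeff_one, gb_eq_zero w (Nat.zero_lt_succ t)]
  | succ n ih =>
    intro t
    rw [prod_range_succ, mul_sub, mul_one, mul_comm _ (C (w^n) * X), mul_assoc, coeff_sub,
      ih t]
    have h2 : (C (w ^ n) * (X * ∏ i ∈ range n, (1 - C (w ^ i) * X))).coeff t
        = w ^ n * (X * ∏ i ∈ range n, (1 - C (w ^ i) * X)).coeff t := by
      rw [coeff_C_mul]
    rw [h2]
    cases t with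
    | zero =>
      simp [coeff_zero_eq_eval_zero]
    | succ t =>
      rw [mul_comm X, coeff_mul_X, ih t, gb_succ_succ]
      rcases le_or_gt t n with h | h
      · have hpow : w ^ ((t+1).choose 2) * w ^ (n - t) = w ^ n * w ^ (t.choose 2) := by
          rw [← pow_add, ← pow_add, choose_two_succ]
          congr 1
          omega
        linear_combination (-(-1:R)^(t+1) * gb w n t) * hpow
      · rw [gb_eq_zero w h, gb_eq_zero w (by omega)]
        ring


section
variable {F : Type*} [Field F] (w : F)

/-- L3: product formula, integer exponents. -/
lemma gb_mul_prod (hw : w ≠ 0) : ∀ (n : ℕ) (k : ℕ),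
    gb w n k * ∏ i ∈ range k, (1 - w ^ ((i:ℤ)+1)) = ∏ i ∈ range k, (1 - w ^ ((n:ℤ) - i)) := by
  intro n
  induction n with
  | zero =>
    intro k
    cases k with
    | zero => simp
    | succ k =>
      rw [gb_zero_succ, zero_mul, eq_comm]
      apply prod_eq_zero (mem_range.2 (Nat.zero_lt_succ k))
      norm_num
  | succ n ih =>
    intro k
    cases k with
    | zero => simp
    | succ k =>
      rcases le_or_gt k n with h | h
      · have hA : gb w n (k+1) * ((∏ i ∈ range k, (1 - w ^ ((i:ℤ)+1))) * (1 - w^((k:ℤ)+1)))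
            = (∏ i ∈ range k, (1 - w^((n:ℤ)-i))) * (1 - w^((n:ℤ)-k)) := by
          rw [← prod_range_succ, ← prod_range_succ]; exact ih (k+1)
        have hB := ih k
        have hw2 : w ^ (n - k : ℕ) = w ^ ((n:ℤ) - k) := by
          rw [← zpow_natCast]; congr 1; omega
        have hw3 : w ^ ((n:ℤ)-k) * w ^ ((k:ℤ)+1) = w ^ ((n:ℤ)+1) := by
          rw [← zpow_add₀ hw]; congr 1; ring
        have hR : ∏ i ∈ range (k+1), (1 - w ^ (((n+1:ℕ):ℤ) - i))
            = (∏ i ∈ range k, (1 - w^((n:ℤ)-i))) * (1 - w^((n:ℤ)+1)) := by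
          rw [prod_range_succ']
          congr 1
          · apply prod_congr rfl; intro i _; congr 1; push_cast; ring_nf
          all_goals (try (push_cast; norm_num))
        rw [gb_succ_succ, prod_range_succ, hR, hw2]
        linear_combination hA + (w^((n:ℤ)-k) * (1 - w^((k:ℤ)+1))) * hB
          - (∏ i ∈ range k, (1 - w^((n:ℤ)-i))) * hw3
      · rw [gb_eq_zero w (by omega), zero_mul, eq_comm]
        apply prod_eq_zero (mem_range.2 (show n+1 < k+1 by omega))
        norm_num

/-- L4: q-Chu-Vandermonde. -/
lemma gb_vandermonde (hw : w ≠ 0) (m : ℕ) : ∀ (n r : ℕ),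
    ∑ k ∈ range (r+1), gb w m k * gb w n (r-k) * w ^ (((m:ℤ)-k)*((r:ℤ)-k))
      = gb w (m+n) r := by
  intro n
  induction n with
  | zero =>
    intro r
    rw [Finset.sum_eq_single_of_mem r (self_mem_range_succ r)]
    · simp
    · intro k hk hne
      have h1 : 0 < r - k := by simp only [mem_range] at hk; omega
      rw [gb_eq_zero w h1, mul_zero, zero_mul]
  | succ n ih =>
    intro r
    cases r with
    | zero => simp
    | succ r =>
      rw [show m + (n+1) = (m+n)+1 by omega, gb_succ_succ, ← ih (r+1), ← ih r, sum_range_succ]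
      conv_rhs => rw [sum_range_succ]
      rw [mul_sum]
      have hlast : gb w m (r+1) * gb w (n+1) (r+1-(r+1)) * w ^ (((m:ℤ)-((r+1:ℕ):ℤ))*(((r+1:ℕ):ℤ)-((r+1:ℕ):ℤ)))
          = gb w m (r+1) * gb w n (r+1-(r+1)) * w ^ (((m:ℤ)-((r+1:ℕ):ℤ))*(((r+1:ℕ):ℤ)-((r+1:ℕ):ℤ))) := by
        norm_num
      have hsum : ∑ k ∈ range (r+1), gb w m k * gb w (n+1) (r+1-k) * w ^ (((m:ℤ)-k)*(((r+1:ℕ):ℤ)-k))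
          = ∑ k ∈ range (r+1), (gb w m k * gb w n (r+1-k) * w ^ (((m:ℤ)-k)*(((r+1:ℕ):ℤ)-k))
            + w ^ (m+n-r) * (gb w m k * gb w n (r-k) * w ^ (((m:ℤ)-k)*((r:ℤ)-k)))) := by
        apply sum_congr rfl
        intro k hk
        have hk' : k ≤ r := by simp only [mem_range] at hk; omega
        have e : r + 1 - k = (r - k) + 1 := by omega
        rw [e, gb_succ_succ]
        rcases le_or_gt (r - k) n with h1 | h1
        · rcases le_or_gt k m with h2 | h2
          · have c1 : (w ^ (n - (r-k)) : F) = w ^ ((n:ℤ) - ((r:ℤ) - k)) := by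
              rw [← zpow_natCast]; congr 1; omega
            have c2 : (w ^ (m + n - r) : F) = w ^ ((m:ℤ) + n - r) := by
              rw [← zpow_natCast]; congr 1; omega
            rw [c1, c2]
            have key : w ^ ((n:ℤ) - ((r:ℤ) - k)) * w ^ (((m:ℤ)-k)*(((r+1:ℕ):ℤ)-k))
                = w ^ ((m:ℤ)+n-r) * w ^ (((m:ℤ)-k)*((r:ℤ)-k)) := by
              rw [← zpow_add₀ hw, ← zpow_add₀ hw]; congr 1; push_cast; ring
            linear_combination (gb w m k * gb w n (r-k)) * key
          · rw [gb_eq_zero w h2]; ring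
        · rw [gb_eq_zero w h1, gb_eq_zero w (show n < r - k + 1 by omega)]; ring
      rw [hsum, sum_add_distrib]
      linear_combination hlast

lemma two_choose_two (t : ℕ) : 2 * t.choose 2 = t * (t-1) := by
  rcases Nat.even_or_odd t with h | h <;>
  · rw [Nat.choose_two_right]
    refine Nat.mul_div_cancel' ?_
    rcases Nat.eq_zero_or_pos t with rfl | ht
    · simp
    · have : t - 1 + 1 = t := by omega
      calc (2:ℕ) ∣ (t-1) * (t-1+1) := (Nat.even_mul_succ_self (t-1)).two_dvd
        _ = t * (t-1) := by rw [this]; ring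


variable (Z : F) (p : ℕ) (hZ : ∀ t : ℕ, 0 < t → t < p → (1:F) - Z ^ t ≠ 0)

include hZ in
lemma prodD_ne_zero (k : ℕ) (hk : k < p) : ∏ i ∈ range k, (1 - Z ^ ((i:ℤ)+1)) ≠ 0 := by
  rw [Finset.prod_ne_zero_iff]
  intro i hi
  simp only [mem_range] at hi
  have e : Z ^ ((i:ℤ)+1) = Z ^ (i+1) := by
    rw [show ((i:ℤ)+1) = ((i+1 : ℕ) : ℤ) by omega, zpow_natCast]
  rw [e]
  exact hZ (i+1) (Nat.succ_pos i) (by omega)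

lemma prod_split_H1 (j k : ℕ) (hkj : k ≤ j) :
    (∏ i ∈ range k, (1 - Z^((j:ℤ)-i))) * ∏ i ∈ range (j-k), (1 - Z^((i:ℤ)+1))
      = ∏ i ∈ range j, (1 - Z^((i:ℤ)+1)) := by
  conv_rhs => rw [show j = (j-k)+k by omega]
  rw [prod_range_add, mul_comm]
  congr 1
  rw [← prod_range_reflect (fun i => 1 - Z^((j:ℤ)-i)) k]
  apply prod_congr rfl
  intro i hi
  simp only [mem_range] at hi
  congr 2
  omega

lemma prod_split_H2 (a k j : ℕ) (hka : k ≤ a) (hkj : k ≤ j) :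
    (∏ i ∈ range k, (1 - Z^((a:ℤ)-i))) * ∏ i ∈ range (j-k), (1 - Z^(((a-k:ℕ):ℤ)-i))
      = ∏ i ∈ range j, (1 - Z^((a:ℤ)-i)) := by
  conv_rhs => rw [show j = k+(j-k) by omega]
  rw [prod_range_add]
  congr 1
  apply prod_congr rfl
  intro i hi
  congr 2
  omega

include hZ in
lemma gb_factor (hZ0 : Z ≠ 0) (a j k : ℕ) (hkj : k ≤ j) (hjp : j < p) :
    gb Z a k * gb Z (a-k) (j-k) = gb Z a j * gb Z j k := by
  rcases le_or_gt k a with hka | hka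
  · apply mul_right_cancel₀ (b := (∏ i ∈ range k, (1 - Z^((i:ℤ)+1)))
      * ∏ i ∈ range (j-k), (1 - Z^((i:ℤ)+1)))
      (mul_ne_zero (prodD_ne_zero Z p hZ k (by omega)) (prodD_ne_zero Z p hZ (j-k) (by omega)))
    calc gb Z a k * gb Z (a-k) (j-k) * ((∏ i ∈ range k, (1 - Z^((i:ℤ)+1)))
          * ∏ i ∈ range (j-k), (1 - Z^((i:ℤ)+1)))
        = (gb Z a k * ∏ i ∈ range k, (1 - Z^((i:ℤ)+1)))
          * (gb Z (a-k) (j-k) * ∏ i ∈ range (j-k), (1 - Z^((i:ℤ)+1))) := by ring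
      _ = (∏ i ∈ range k, (1 - Z^((a:ℤ)-i)))
          * ∏ i ∈ range (j-k), (1 - Z^(((a-k:ℕ):ℤ)-i)) := by
            rw [gb_mul_prod Z hZ0, gb_mul_prod Z hZ0]
      _ = ∏ i ∈ range j, (1 - Z^((a:ℤ)-i)) := prod_split_H2 Z a k j hka hkj
      _ = gb Z a j * ∏ i ∈ range j, (1 - Z^((i:ℤ)+1)) := (gb_mul_prod Z hZ0 a j).symm
      _ = gb Z a j * gb Z j k * ((∏ i ∈ range k, (1 - Z^((i:ℤ)+1)))
          * ∏ i ∈ range (j-k), (1 - Z^((i:ℤ)+1))) := by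
            rw [← prod_split_H1 Z j k hkj, ← gb_mul_prod Z hZ0 j k]; ring
  · rw [gb_eq_zero Z hka, gb_eq_zero Z (show a < j by omega), zero_mul, zero_mul]

include hZ in
lemma gb_symm (hZ0 : Z ≠ 0) (j k : ℕ) (hkj : k ≤ j) (hjp : j < p) :
    gb Z j (j-k) = gb Z j k := by
  apply mul_right_cancel₀ (b := (∏ i ∈ range k, (1 - Z^((i:ℤ)+1)))
      * ∏ i ∈ range (j-k), (1 - Z^((i:ℤ)+1)))
      (mul_ne_zero (prodD_ne_zero Z p hZ k (by omega)) (prodD_ne_zero Z p hZ (j-k) (by omega)))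
  have h1 := prod_split_H1 Z j (j-k) (Nat.sub_le j k)
  rw [show j - (j-k) = k by omega] at h1
  calc gb Z j (j-k) * ((∏ i ∈ range k, (1 - Z^((i:ℤ)+1))) * ∏ i ∈ range (j-k), (1 - Z^((i:ℤ)+1)))
      = (gb Z j (j-k) * ∏ i ∈ range (j-k), (1 - Z^((i:ℤ)+1)))
        * ∏ i ∈ range k, (1 - Z^((i:ℤ)+1)) := by ring
    _ = (∏ i ∈ range (j-k), (1 - Z^((j:ℤ)-i))) * ∏ i ∈ range k, (1 - Z^((i:ℤ)+1)) := by
        rw [gb_mul_prod Z hZ0]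
    _ = ∏ i ∈ range j, (1 - Z^((i:ℤ)+1)) := h1
    _ = (∏ i ∈ range k, (1 - Z^((j:ℤ)-i))) * ∏ i ∈ range (j-k), (1 - Z^((i:ℤ)+1)) :=
        (prod_split_H1 Z j k hkj).symm
    _ = gb Z j k * ((∏ i ∈ range k, (1 - Z^((i:ℤ)+1))) * ∏ i ∈ range (j-k), (1 - Z^((i:ℤ)+1))) := by
        rw [← gb_mul_prod Z hZ0 j k]; ring

lemma choose_two_int (t : ℕ) : (t.choose 2 : ℤ) * 2 = t * ((t:ℤ) - 1) := by
  cases t with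
  | zero => norm_num
  | succ n =>
    have h : 2 * (n+1).choose 2 = (n+1) * n := by
      rw [Nat.choose_two_right]
      refine Nat.mul_div_cancel' ?_
      simpa [mul_comm] using (Nat.even_mul_succ_self n).two_dvd
    have h2 : (((n+1).choose 2 : ℤ)) * 2 = ((n+1) * n : ℕ) := by exact_mod_cast by omega
    rw [h2]; push_cast; ring

include hZ in
/-- The key identity at a root of unity. -/
lemma KID (hZ0 : Z ≠ 0) (a j : ℕ) (hap : a < p) (hjp : j < p) :
    ∑ k ∈ range (a+1), gb Z a k ^ 2 * Z ^ ((k.choose 2 : ℤ) - k*a) * (-1:F)^k *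
        (if k ≤ j then (-1:F)^(j-k) * Z ^ (((j-k).choose 2 : ℤ)) * gb Z (a-k) (j-k) else 0)
      = (-1:F)^j * Z ^ ((j.choose 2 : ℤ) - a*j) * gb Z a j * gb Z (a+j) j := by
  have step1 : ∑ k ∈ range (a+1), gb Z a k ^ 2 * Z ^ ((k.choose 2 : ℤ) - k*a) * (-1:F)^k *
        (if k ≤ j then (-1:F)^(j-k) * Z ^ (((j-k).choose 2 : ℤ)) * gb Z (a-k) (j-k) else 0)
      = ∑ k ∈ range (j+1), gb Z a k ^ 2 * Z ^ ((k.choose 2 : ℤ) - k*a) * (-1:F)^k *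
        (if k ≤ j then (-1:F)^(j-k) * Z ^ (((j-k).choose 2 : ℤ)) * gb Z (a-k) (j-k) else 0) := by
    rcases le_total a j with h | h
    · apply Finset.sum_subset (show range (a+1) ⊆ range (j+1) by
        intro x hx; simp only [mem_range] at *; omega)
      intro x hx hnx
      simp only [mem_range] at hx hnx
      rw [gb_eq_zero Z (show a < x by omega)]
      ring
    · refine (Finset.sum_subset (show range (j+1) ⊆ range (a+1) by
        intro x hx; simp only [mem_range] at *; omega) ?_).symm
      intro x hx hnx
      simp only [mem_range] at hx hnx
      rw [if_neg (by omega)]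
      ring
  rw [step1]
  have step2 : ∀ k ∈ range (j+1), gb Z a k ^ 2 * Z ^ ((k.choose 2 : ℤ) - k*a) * (-1:F)^k *
        (if k ≤ j then (-1:F)^(j-k) * Z ^ (((j-k).choose 2 : ℤ)) * gb Z (a-k) (j-k) else 0)
      = ((-1:F)^j * Z ^ ((j.choose 2 : ℤ) - a*j) * gb Z a j)
        * (gb Z a k * gb Z j k * Z ^ (((a:ℤ)-k)*((j:ℤ)-k))) := by
    intro k hk
    simp only [mem_range] at hk
    have hkj : k ≤ j := by omega
    rw [if_pos hkj]
    have hsign : (-1:F)^k * (-1:F)^(j-k) = (-1:F)^j := by rw [← pow_add]; congr 1; omega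
    have hfac := gb_factor Z p hZ hZ0 a j k hkj hjp
    have hexp : ((k.choose 2:ℤ) - k*a) + ((j-k).choose 2 : ℤ)
        = ((j.choose 2:ℤ) - a*j) + ((a:ℤ)-k)*((j:ℤ)-k) := by
      have h1 := choose_two_int k
      have h2 := choose_two_int (j-k)
      have h3 := choose_two_int j
      have hc : ((j-k:ℕ):ℤ) = (j:ℤ) - k := by omega
      rw [hc] at h2
      have hexp2 : (((k.choose 2:ℤ) - k*a) + ((j-k).choose 2 : ℤ)) * 2
          = (((j.choose 2:ℤ) - a*j) + ((a:ℤ)-k)*((j:ℤ)-k)) * 2 := by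
        linear_combination h1 + h2 - h3
      linarith
    have hZe : Z ^ ((k.choose 2:ℤ) - k*a) * Z ^ (((j-k).choose 2:ℤ))
        = Z ^ ((j.choose 2:ℤ) - a*j) * Z ^ (((a:ℤ)-k)*((j:ℤ)-k)) := by
      rw [← zpow_add₀ hZ0, ← zpow_add₀ hZ0, hexp]
    calc gb Z a k ^ 2 * Z ^ ((k.choose 2 : ℤ) - k*a) * (-1:F)^k *
          ((-1:F)^(j-k) * Z ^ (((j-k).choose 2 : ℤ)) * gb Z (a-k) (j-k))
        = ((-1:F)^k * (-1:F)^(j-k)) * (Z ^ ((k.choose 2 : ℤ) - k*a) * Z ^ (((j-k).choose 2:ℤ)))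
          * (gb Z a k * (gb Z a k * gb Z (a-k) (j-k))) := by ring
      _ = ((-1:F)^j) * (Z ^ ((j.choose 2:ℤ) - a*j) * Z ^ (((a:ℤ)-k)*((j:ℤ)-k)))
          * (gb Z a k * (gb Z a j * gb Z j k)) := by rw [hsign, hZe, hfac]
      _ = ((-1:F)^j * Z ^ ((j.choose 2 : ℤ) - a*j) * gb Z a j)
          * (gb Z a k * gb Z j k * Z ^ (((a:ℤ)-k)*((j:ℤ)-k))) := by ring
  rw [sum_congr rfl step2, ← mul_sum]
  have step3 : ∑ k ∈ range (j+1), gb Z a k * gb Z j k * Z ^ (((a:ℤ)-k)*((j:ℤ)-k))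
      = gb Z (a+j) j := by
    rw [← gb_vandermonde Z hZ0 a j j]
    apply sum_congr rfl
    intro k hk
    simp only [mem_range] at hk
    rw [← gb_symm Z p hZ hZ0 j k (by omega) hjp]
  rw [step3]

lemma zpow_sum' (x : F) (hx : x ≠ 0) {ι : Type*} (s : Finset ι) (f : ι → ℤ) :
    x ^ (∑ i ∈ s, f i) = ∏ i ∈ s, x ^ f i := by
  induction s using Finset.cons_induction with
  | empty => simp
  | cons i s his ih => rw [Finset.sum_cons, Finset.prod_cons, zpow_add₀ hx, ih]

lemma hDconv (j : ℕ) : ∏ i ∈ range j, (1 - Z * Z^i) = ∏ i ∈ range j, (1 - Z^((i:ℤ)+1)) := by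
  apply prod_congr rfl
  intro i _
  rw [← pow_succ', show ((i:ℤ)+1) = ((i+1:ℕ):ℤ) by omega, zpow_natCast]

lemma sum_range_int (a j : ℕ) :
    ∑ i ∈ range j, ((i:ℤ) - a) = (j.choose 2 : ℤ) - (a:ℤ)*j := by
  rw [Finset.sum_sub_distrib, Finset.sum_const, card_range]
  have h1 : ∑ i ∈ range j, (i:ℤ) = ((∑ i ∈ range j, i : ℕ) : ℤ) := by
    rw [Nat.cast_sum]
  rw [h1, sum_range_id, ← Nat.choose_two_right]
  push_cast
  ring

include hZ in
lemma evalA (hZ0 : Z ≠ 0) (a j : ℕ) (u v : F) (hu : u = Z ^ (-(a:ℤ))) (hv : v = Z ^ ((a:ℤ)+1))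
    (hjp : j < p) :
    (∏ i ∈ range j, (1 - u * Z^i)) * (∏ i ∈ range j, (1 - v * Z^i))
        / (∏ i ∈ range j, (1 - Z * Z^i))^2
      = (-1:F)^j * Z ^ ((j.choose 2:ℤ) - (a:ℤ)*j) * gb Z a j * gb Z (a+j) j := by
  have hDne := prodD_ne_zero Z p hZ j hjp
  have h1 : ∏ i ∈ range j, (1 - u * Z^i)
      = (-1:F)^j * Z ^ ((j.choose 2:ℤ) - (a:ℤ)*j)
        * (gb Z a j * ∏ i ∈ range j, (1 - Z^((i:ℤ)+1))) := by
    have e1 : ∀ i ∈ range j, (1 - u * Z^i) = (-1) * Z^((i:ℤ)-a) * (1 - Z^((a:ℤ)-i)) := by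
      intro i _
      have c1 : u * Z^i = Z^((i:ℤ)-a) := by
        rw [hu, ← zpow_natCast Z i, ← zpow_add₀ hZ0]
        congr 1
        ring
      have c2 : Z^((i:ℤ)-a) * Z^((a:ℤ)-i) = 1 := by
        rw [← zpow_add₀ hZ0]
        norm_num
      rw [c1]
      linear_combination -c2
    rw [prod_congr rfl e1, prod_mul_distrib, prod_mul_distrib, prod_const, card_range,
      ← zpow_sum' Z hZ0, sum_range_int, gb_mul_prod Z hZ0 a j]
  have h2 : ∏ i ∈ range j, (1 - v * Z^i)
      = gb Z (a+j) j * ∏ i ∈ range j, (1 - Z^((i:ℤ)+1)) := by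
    have e1 : ∀ i ∈ range j, (1 - v * Z^i) = (1 - Z^(((a+j:ℕ):ℤ) - ((j-1-i : ℕ):ℤ))) := by
      intro i hi
      simp only [mem_range] at hi
      rw [hv, ← zpow_natCast Z i, ← zpow_add₀ hZ0]
      congr 2
      omega
    rw [prod_congr rfl e1, prod_range_reflect (fun i => (1 - Z^(((a+j:ℕ):ℤ) - (i:ℤ)))) j,
      gb_mul_prod Z hZ0 (a+j) j]
  rw [hDconv, h1, h2, div_eq_iff (pow_ne_zero 2 hDne)]
  ring

include hZ in
lemma evalBinom (hZ0 : Z ≠ 0) (a k : ℕ) (hka : k ≤ a) (hkp : k < p) :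
    (∏ i ∈ range k, (1 - Z^(a-k+1) * Z^i)) / (∏ i ∈ range k, (1 - Z * Z^i)) = gb Z a k := by
  have hDne := prodD_ne_zero Z p hZ k hkp
  have h1 : ∏ i ∈ range k, (1 - Z^(a-k+1) * Z^i)
      = gb Z a k * ∏ i ∈ range k, (1 - Z^((i:ℤ)+1)) := by
    have e1 : ∀ i ∈ range k, (1 - Z^(a-k+1) * Z^i) = (1 - Z^((a:ℤ) - ((k-1-i : ℕ):ℤ))) := by
      intro i hi
      simp only [mem_range] at hi
      rw [← pow_add, ← zpow_natCast Z (a-k+1+i)]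
      congr 2
      omega
    rw [prod_congr rfl e1, prod_range_reflect (fun i => (1 - Z^((a:ℤ) - (i:ℤ)))) k,
      gb_mul_prod Z hZ0 a k]
  rw [hDconv, h1, div_eq_iff hDne]
end

noncomputable def Phi (p : ℕ) : Polynomial ℚ := ∑ i ∈ Finset.range p, Polynomial.X ^ i

instance phi_irred (p : ℕ) [Fact p.Prime] : Fact (Irreducible (Phi p)) := by
  constructor
  rw [Phi, ← Polynomial.cyclotomic_prime ℚ p]
  exact Polynomial.cyclotomic.irreducible_rat (Fact.out (p := p.Prime)).pos

section
variable (p : ℕ) [Fact p.Prime]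

/-- `A ≈ u` : the rational function `A` is regular at the `p`-th cyclotomic point and
evaluates there to `u`. -/
def Approx (A : RatFunc ℚ) (u : AdjoinRoot (Phi p)) : Prop :=
  ∃ f g : Polynomial ℚ, AdjoinRoot.mk (Phi p) g ≠ 0 ∧
    A * algebraMap (Polynomial ℚ) (RatFunc ℚ) g = algebraMap (Polynomial ℚ) (RatFunc ℚ) f ∧
    u * AdjoinRoot.mk (Phi p) g = AdjoinRoot.mk (Phi p) f

variable {p}

lemma approx_algebraMap (f : Polynomial ℚ) :
    Approx p (algebraMap (Polynomial ℚ) (RatFunc ℚ) f) (AdjoinRoot.mk (Phi p) f) :=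
  ⟨f, 1, by simp, by simp, by simp⟩

lemma approx_X : Approx p RatFunc.X (AdjoinRoot.root (Phi p)) := by
  simpa using approx_algebraMap (p := p) Polynomial.X

lemma approx_one : Approx p 1 1 := by simpa using approx_algebraMap (p := p) 1

lemma approx_zero : Approx p 0 0 := by simpa using approx_algebraMap (p := p) 0

lemma approx_add {A B u v} (hA : Approx p A u) (hB : Approx p B v) :
    Approx p (A + B) (u + v) := by
  obtain ⟨f₁, g₁, hg₁, hA1, hA2⟩ := hA
  obtain ⟨f₂, g₂, hg₂, hB1, hB2⟩ := hB
  refine ⟨f₁ * g₂ + f₂ * g₁, g₁ * g₂, ?_, ?_, ?_⟩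
  · rw [map_mul]; exact mul_ne_zero hg₁ hg₂
  · rw [map_mul, map_add, map_mul, map_mul]
    linear_combination (algebraMap (Polynomial ℚ) (RatFunc ℚ) g₂) * hA1 +
      (algebraMap (Polynomial ℚ) (RatFunc ℚ) g₁) * hB1
  · rw [map_mul, map_add, map_mul, map_mul]
    linear_combination (AdjoinRoot.mk (Phi p) g₂) * hA2 + (AdjoinRoot.mk (Phi p) g₁) * hB2

lemma approx_mul {A B u v} (hA : Approx p A u) (hB : Approx p B v) :
    Approx p (A * B) (u * v) := by
  obtain ⟨f₁, g₁, hg₁, hA1, hA2⟩ := hA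
  obtain ⟨f₂, g₂, hg₂, hB1, hB2⟩ := hB
  refine ⟨f₁ * f₂, g₁ * g₂, ?_, ?_, ?_⟩
  · rw [map_mul]; exact mul_ne_zero hg₁ hg₂
  · rw [map_mul, map_mul]
    linear_combination (algebraMap (Polynomial ℚ) (RatFunc ℚ) g₂ * B) * hA1 +
      (algebraMap (Polynomial ℚ) (RatFunc ℚ) f₁) * hB1
  · rw [map_mul, map_mul]
    linear_combination (AdjoinRoot.mk (Phi p) g₂ * v) * hA2 + (AdjoinRoot.mk (Phi p) f₁) * hB2

lemma approx_neg {A u} (hA : Approx p A u) : Approx p (-A) (-u) := by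
  obtain ⟨f, g, hg, h1, h2⟩ := hA
  exact ⟨-f, g, hg, by rw [map_neg]; linear_combination -h1, by rw [map_neg]; linear_combination -h2⟩

lemma approx_sub {A B u v} (hA : Approx p A u) (hB : Approx p B v) :
    Approx p (A - B) (u - v) := by
  simpa [sub_eq_add_neg] using approx_add hA (approx_neg hB)

lemma approx_pow {A u} (hA : Approx p A u) (n : ℕ) : Approx p (A ^ n) (u ^ n) := by
  induction n with
  | zero => simpa using approx_one
  | succ n ih => rw [pow_succ, pow_succ]; exact approx_mul ih hA

lemma approx_inv {A u} (hA : Approx p A u) (hu : u ≠ 0) : Approx p A⁻¹ u⁻¹ := by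
  obtain ⟨f, g, hg, h1, h2⟩ := hA
  have hf : AdjoinRoot.mk (Phi p) f ≠ 0 := by
    rw [← h2]; exact mul_ne_zero hu hg
  have hfp : f ≠ 0 := by rintro rfl; simp at hf
  have hA0 : A ≠ 0 := by
    rintro rfl
    rw [zero_mul] at h1
    exact hfp ((map_eq_zero_iff _ (IsFractionRing.injective (Polynomial ℚ) (RatFunc ℚ))).1 h1.symm)
  refine ⟨g, f, hf, ?_, ?_⟩
  · rw [inv_mul_eq_iff_eq_mul₀ hA0]
    exact h1.symm
  · rw [inv_mul_eq_iff_eq_mul₀ hu]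
    exact h2.symm

lemma approx_div {A B u v} (hA : Approx p A u) (hB : Approx p B v) (hv : v ≠ 0) :
    Approx p (A / B) (u / v) := by
  rw [div_eq_mul_inv, div_eq_mul_inv]
  exact approx_mul hA (approx_inv hB hv)

lemma approx_zpow {A u} (hA : Approx p A u) (hu : u ≠ 0) (n : ℤ) :
    Approx p (A ^ n) (u ^ n) := by
  cases n with
  | ofNat n => simpa using approx_pow hA n
  | negSucc n =>
    rw [zpow_negSucc, zpow_negSucc]
    exact approx_inv (approx_pow hA (n+1)) (pow_ne_zero _ hu)

lemma approx_sum {ι : Type*} (s : Finset ι) (A : ι → RatFunc ℚ) (u : ι → AdjoinRoot (Phi p))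
    (h : ∀ i ∈ s, Approx p (A i) (u i)) :
    Approx p (∑ i ∈ s, A i) (∑ i ∈ s, u i) := by
  induction s using Finset.cons_induction with
  | empty => simpa using approx_zero
  | cons i s his ih =>
    rw [Finset.sum_cons, Finset.sum_cons]
    exact approx_add (h i (Finset.mem_cons_self i s)) (ih fun j hj => h j (Finset.mem_cons.2 (Or.inr hj)))

lemma approx_prod {ι : Type*} (s : Finset ι) (A : ι → RatFunc ℚ) (u : ι → AdjoinRoot (Phi p))
    (h : ∀ i ∈ s, Approx p (A i) (u i)) :
    Approx p (∏ i ∈ s, A i) (∏ i ∈ s, u i) := by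
  induction s using Finset.cons_induction with
  | empty => simpa using approx_one
  | cons i s his ih =>
    rw [Finset.prod_cons, Finset.prod_cons]
    exact approx_mul (h i (Finset.mem_cons_self i s)) (ih fun j hj => h j (Finset.mem_cons.2 (Or.inr hj)))

lemma approx_ite {A B u v} (c : Prop) [Decidable c] (hA : Approx p A u) (hB : Approx p B v) :
    Approx p (if c then A else B) (if c then u else v) := by
  split <;> assumption

lemma approx_congr {A u v} (hA : Approx p A u) (huv : u = v) : Approx p A v := huv ▸ hA

/-- Final step : an `Approx _ 0` gives the congruence. -/
lemma modQ_of_approx {A B : RatFunc ℚ} (h : Approx p (A - B) 0) : ModQ 1 p A B := by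
  obtain ⟨f, g, hg, h1, h2⟩ := h
  rw [zero_mul, eq_comm, AdjoinRoot.mk_eq_zero] at h2
  obtain ⟨c, rfl⟩ := h2
  refine ⟨c, g, ?_, ?_⟩
  · intro hdvd
    exact hg (AdjoinRoot.mk_eq_zero.2 hdvd)
  · have hq : qInt p ^ 1 = algebraMap (Polynomial ℚ) (RatFunc ℚ) (Phi p) := by
      rw [pow_one, qInt, Phi, map_sum]
      apply Finset.sum_congr rfl
      intro i _
      rw [map_pow, q, RatFunc.algebraMap_X]
    rw [hq, ← map_mul]
    exact h1
end


/-- Theorem 3.4: coefficientwise in `x` mod `[p]`, with `a = ⟨-r/m⟩_p`,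
`∑_{k<p} (q^r;q^m)_k (q^{m-r};q^m)_k x^k / (q^m;q^m)_k²
 ≡ ∑_{k≤a} qbinom(a,k;q^m)² q^{mk(k-1)/2 - mka} (-x)^k (x;q^m)_{a-k}`. -/
theorem q_rv_general_closed (p m r : ℕ) [Fact p.Prime] (hodd : Odd p)
    (hm : 0 < m) (hr : 0 < r) (hpm : ¬ p ∣ m)
    (a : ℕ) (ha : a = ZMod.val (-(r : ZMod p) / (m : ZMod p))) :
    ∀ j : ℕ, ModQ 1 p
      ((∑ k ∈ Finset.range p,
          Polynomial.C (qPoch (q ^ r) (q ^ m) k * qPoch (q ^ ((m : ℤ) - r)) (q ^ m) k /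
              qPoch (q ^ m) (q ^ m) k ^ 2) *
            Polynomial.X ^ k : Polynomial (RatFunc ℚ)).coeff j)
      ((∑ k ∈ Finset.range (a + 1),
          Polynomial.C (qBinom a k (q ^ m) ^ 2 *
              q ^ ((m * (k * (k - 1)) / 2 : ℕ) - (m : ℤ) * k * a)) *
            (-Polynomial.X) ^ k *
            ∏ i ∈ Finset.range (a - k),
              (1 - Polynomial.C ((q ^ m) ^ i) * Polynomial.X) :
          Polynomial (RatFunc ℚ)).coeff j) := by
  intro j
  have hp : p.Prime := Fact.out
  haveI : NeZero p := ⟨hp.ne_zero⟩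
  have hap : a < p := by rw [ha]; exact ZMod.val_lt _
  -- the cyclotomic point
  set ζ := AdjoinRoot.root (Phi p) with hζdef
  set Z := ζ ^ m with hZdef
  have hPhiC : Phi p = Polynomial.cyclotomic p ℚ := by
    rw [Phi, Polynomial.cyclotomic_prime]
  haveI : CharZero (AdjoinRoot (Phi p)) :=
    charZero_of_injective_algebraMap (algebraMap ℚ (AdjoinRoot (Phi p))).injective
  haveI : NeZero ((p : ℕ) : AdjoinRoot (Phi p)) := ⟨Nat.cast_ne_zero.2 hp.ne_zero⟩
  have hprim : IsPrimitiveRoot ζ p := by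
    rw [← Polynomial.isRoot_cyclotomic_iff]
    rw [← Polynomial.map_cyclotomic p (algebraMap ℚ (AdjoinRoot (Phi p))), Polynomial.IsRoot,
      Polynomial.eval_map, ← hPhiC]
    exact (AdjoinRoot.aeval_eq (Phi p)).trans AdjoinRoot.mk_self
  have hζp : ζ ^ p = 1 := hprim.pow_eq_one
  have hζ0 : ζ ≠ 0 := by
    intro h
    rw [h, zero_pow hp.ne_zero] at hζp
    exact zero_ne_one hζp
  have hcop : m.Coprime p := (Nat.Prime.coprime_iff_not_dvd hp |>.2 hpm).symm
  have hZprim : IsPrimitiveRoot Z p := hprim.pow_of_coprime m hcop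
  have hZ0 : Z ≠ 0 := pow_ne_zero m hζ0
  have hZt : ∀ t : ℕ, 0 < t → t < p → (1 : AdjoinRoot (Phi p)) - Z ^ t ≠ 0 := by
    intro t ht htp h
    have h1 : Z ^ t = 1 := by linear_combination -h
    have h2 := (hZprim.pow_eq_one_iff_dvd t).1 h1
    have := Nat.le_of_dvd ht h2
    omega
  have hma : p ∣ r + m * a := by
    have hm0 : (m : ZMod p) ≠ 0 := by
      rw [Ne, ZMod.natCast_eq_zero_iff]
      exact hpm
    have h0 : ((r + m * a : ℕ) : ZMod p) = 0 := by
      push_cast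
      rw [ha, ZMod.natCast_rightInverse _]
      field_simp
      ring
    exact (ZMod.natCast_eq_zero_iff _ p).1 h0
  obtain ⟨c, hc⟩ := hma
  have hra : ζ ^ r * Z ^ a = 1 := by
    rw [hZdef, ← pow_mul, ← pow_add, hc, pow_mul, hζp, one_pow]
  have hu : ζ ^ r = Z ^ (-(a:ℤ)) := by
    rw [zpow_neg, zpow_natCast]
    exact eq_inv_of_mul_eq_one_left (by linear_combination hra)
  have hv : ζ ^ ((m:ℤ) - r) = Z ^ ((a:ℤ)+1) := by
    have h1 : ζ ^ ((m:ℤ) - r) = ζ ^ (m:ℤ) / ζ ^ (r:ℤ) := zpow_sub₀ hζ0 _ _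
    rw [h1, zpow_natCast, zpow_natCast, hu, ← hZdef, zpow_neg, div_inv_eq_mul,
      ← zpow_one_add₀ hZ0, add_comm 1 ((a:ℤ))]
  -- coefficient extraction
  have hAco : (∑ k ∈ Finset.range p,
        Polynomial.C (qPoch (q ^ r) (q ^ m) k * qPoch (q ^ ((m : ℤ) - r)) (q ^ m) k /
            qPoch (q ^ m) (q ^ m) k ^ 2) *
          Polynomial.X ^ k : Polynomial (RatFunc ℚ)).coeff j
      = (if j ∈ range p then qPoch (q ^ r) (q ^ m) j * qPoch (q ^ ((m : ℤ) - r)) (q ^ m) j /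
            qPoch (q ^ m) (q ^ m) j ^ 2 else 0) := by
    rw [finset_sum_coeff]
    simp only [coeff_C_mul, coeff_X_pow, mul_ite, mul_one, mul_zero]
    rw [sum_ite_eq]
  have hBco : (∑ k ∈ Finset.range (a + 1),
        Polynomial.C (qBinom a k (q ^ m) ^ 2 *
            q ^ ((m * (k * (k - 1)) / 2 : ℕ) - (m : ℤ) * k * a)) *
          (-Polynomial.X) ^ k *
          ∏ i ∈ Finset.range (a - k),
            (1 - Polynomial.C ((q ^ m) ^ i) * Polynomial.X) :
        Polynomial (RatFunc ℚ)).coeff j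
      = ∑ k ∈ Finset.range (a + 1),
          (qBinom a k (q ^ m) ^ 2 * q ^ ((m * (k * (k - 1)) / 2 : ℕ) - (m : ℤ) * k * a))
            * (-1 : RatFunc ℚ)^k *
          (if k ≤ j then (-1 : RatFunc ℚ)^(j-k) * (q^m)^((j-k).choose 2) * gb (q^m) (a-k) (j-k)
            else 0) := by
    rw [finset_sum_coeff]
    apply sum_congr rfl
    intro k hk
    have hterm : Polynomial.C (qBinom a k (q ^ m) ^ 2 *
            q ^ ((m * (k * (k - 1)) / 2 : ℕ) - (m : ℤ) * k * a)) *
          (-Polynomial.X) ^ k *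
          ∏ i ∈ Finset.range (a - k), (1 - Polynomial.C ((q ^ m) ^ i) * Polynomial.X)
        = Polynomial.C ((qBinom a k (q ^ m) ^ 2 *
            q ^ ((m * (k * (k - 1)) / 2 : ℕ) - (m : ℤ) * k * a)) * (-1 : RatFunc ℚ)^k) *
          ((∏ i ∈ Finset.range (a - k), (1 - Polynomial.C ((q ^ m) ^ i) * Polynomial.X))
            * Polynomial.X ^ k) := by
      have hneg : ((-Polynomial.X : Polynomial (RatFunc ℚ)))^k
          = Polynomial.C ((-1 : RatFunc ℚ)^k) * Polynomial.X ^ k := by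
        rw [neg_pow, map_pow, map_neg, map_one]
      rw [hneg]
      simp only [map_mul]
      ring
    rw [hterm, coeff_C_mul, coeff_mul_X_pow', coeff_prod_one_sub]
  rw [hAco, hBco]
  rcases lt_or_ge j p with hjp | hjp
  · rw [if_pos (mem_range.2 hjp)]
    apply modQ_of_approx
    have hq : Approx p q ζ := approx_X
    have hqm : Approx p (q ^ m) Z := approx_pow hq m
    -- LHS approximation
    have hAappr : Approx p
        (qPoch (q ^ r) (q ^ m) j * qPoch (q ^ ((m : ℤ) - r)) (q ^ m) j /
          qPoch (q ^ m) (q ^ m) j ^ 2)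
        ((∏ i ∈ range j, (1 - ζ^r * Z^i)) * (∏ i ∈ range j, (1 - ζ^((m:ℤ)-r) * Z^i))
          / (∏ i ∈ range j, (1 - Z * Z^i))^2) := by
      apply approx_div
      · apply approx_mul
        · apply approx_prod
          intro i _
          exact approx_sub approx_one (approx_mul (approx_pow hq r) (approx_pow hqm i))
        · apply approx_prod
          intro i _
          exact approx_sub approx_one (approx_mul (approx_zpow hq hζ0 ((m:ℤ)-r)) (approx_pow hqm i))
      · apply approx_pow
        apply approx_prod
        intro i _
        exact approx_sub approx_one (approx_mul hqm (approx_pow hqm i))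
      · apply pow_ne_zero
        rw [hDconv]
        exact prodD_ne_zero Z p hZt j hjp
    -- RHS approximation
    have hgb : ∀ n t : ℕ, Approx p (gb (q^m) n t) (gb Z n t) := by
      intro n
      induction n with
      | zero =>
        intro t
        cases t with
        | zero => exact approx_one
        | succ t => exact approx_zero
      | succ n ih =>
        intro t
        cases t with
        | zero => exact approx_one
        | succ t =>
          rw [gb_succ_succ, gb_succ_succ]
          exact approx_add (ih (t+1)) (approx_mul (approx_pow hqm (n-t)) (ih t))
    have hBappr : Approx p
        (∑ k ∈ Finset.range (a + 1),
          (qBinom a k (q ^ m) ^ 2 * q ^ ((m * (k * (k - 1)) / 2 : ℕ) - (m : ℤ) * k * a))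
            * (-1 : RatFunc ℚ)^k *
          (if k ≤ j then (-1 : RatFunc ℚ)^(j-k) * (q^m)^((j-k).choose 2) * gb (q^m) (a-k) (j-k)
            else 0))
        (∑ k ∈ range (a+1),
          gb Z a k ^ 2 * Z ^ ((k.choose 2 : ℤ) - k*a) * (-1 : AdjoinRoot (Phi p))^k *
          (if k ≤ j then (-1 : AdjoinRoot (Phi p))^(j-k) * Z ^ (((j-k).choose 2 : ℤ))
              * gb Z (a-k) (j-k) else 0)) := by
      apply approx_sum
      intro k hk
      simp only [mem_range] at hk
      have hka : k ≤ a := by omega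
      have hb1 : Approx p (qBinom a k (q^m)) (gb Z a k) := by
        have h1 : Approx p (qBinom a k (q^m))
            ((∏ i ∈ range k, (1 - Z^(a-k+1) * Z^i)) / (∏ i ∈ range k, (1 - Z * Z^i))) := by
          apply approx_div
          · apply approx_prod
            intro i _
            exact approx_sub approx_one
              (approx_mul (approx_pow hqm (a-k+1)) (approx_pow hqm i))
          · apply approx_prod
            intro i _
            exact approx_sub approx_one (approx_mul hqm (approx_pow hqm i))
          · rw [hDconv]
            exact prodD_ne_zero Z p hZt k (by omega)
        exact approx_congr h1 (evalBinom Z p hZt hZ0 a k hka (by omega))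
      have hb2 : Approx p (q ^ ((m * (k * (k - 1)) / 2 : ℕ) - (m : ℤ) * k * a))
          (Z ^ ((k.choose 2 : ℤ) - k*a)) := by
        apply approx_congr (approx_zpow hq hζ0 _)
        rw [hZdef, ← zpow_natCast ζ m, ← zpow_mul]
        congr 1
        have h2 := two_choose_two k
        have hM : (m * (k * (k - 1)) / 2 : ℕ) = m * k.choose 2 := by
          rw [← h2, show m * (2 * k.choose 2) = m * k.choose 2 * 2 by ring,
            Nat.mul_div_cancel _ (by norm_num)]
        rw [hM]
        push_cast
        ring
      have hb3 : Approx p ((-1 : RatFunc ℚ)^k) ((-1 : AdjoinRoot (Phi p))^k) :=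
        approx_pow (approx_neg approx_one) k
      have hb4 : Approx p ((-1 : RatFunc ℚ)^(j-k)) ((-1 : AdjoinRoot (Phi p))^(j-k)) :=
        approx_pow (approx_neg approx_one) (j-k)
      have hb5 : Approx p ((q^m)^((j-k).choose 2)) (Z ^ (((j-k).choose 2 : ℤ))) := by
        apply approx_congr (approx_pow hqm ((j-k).choose 2))
        rw [← zpow_natCast]
      exact approx_mul (approx_mul (approx_mul (approx_pow hb1 2) hb2) hb3)
        (approx_ite _ (approx_mul (approx_mul hb4 hb5) (hgb (a-k) (j-k))) approx_zero)
    apply approx_congr (approx_sub hAappr hBappr)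
    rw [evalA Z p hZt hZ0 a j (ζ^r) (ζ^((m:ℤ)-r)) hu hv hjp,
      KID Z p hZt hZ0 a j hap hjp, sub_self]
  · rw [if_neg (by simp only [mem_range]; omega)]
    have hB0 : ∑ k ∈ Finset.range (a + 1),
          (qBinom a k (q ^ m) ^ 2 * q ^ ((m * (k * (k - 1)) / 2 : ℕ) - (m : ℤ) * k * a))
            * (-1 : RatFunc ℚ)^k *
          (if k ≤ j then (-1 : RatFunc ℚ)^(j-k) * (q^m)^((j-k).choose 2) * gb (q^m) (a-k) (j-k)
            else 0) = 0 := by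
      apply sum_eq_zero
      intro k hk
      simp only [mem_range] at hk
      rw [if_pos (by omega), gb_eq_zero _ (show a - k < j - k by omega), mul_zero, mul_zero]
    rw [hB0]
    exact modQ_of_approx (by simpa using approx_zero)
end
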